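/- arXiv:2604.09848 — 5 statements merged into one kernel-verified Lean document; each statement's English description precedes it below -/
import Mathlib

section
/- Suppose there exists a constant $C_c > 0$ such that for all $v \in L^2(B)$, $$\tfrac{1}{2}\int_B\int_B G(x-y)(v(x)-v(y))^2\,dx\,dy + \int_B a(x)v(x)^2\,dx \geq C_c \|v\|_{L^2(B)}^2,$$ where $a(x) = \int_A J(x-y)\,dy$. Then for every $u \in L^2(A)$ there exists a unique $v \in L^2(B)$ satisfying, for a.e. $x \in B$, $$0 = \int_B G(x-y)(v(y)-v(x))\,dy + \int_A J(x-y)(u(y)-v(x))\,dy,$$ and moreover $\|v\|_{L^2(B)} \leq \frac{1}{C_c}\left(\int_B\int_A J(x-y)^2\,dy\,dx\right)^{1/2}\|u\|_{L^2(A)}$. -/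
open MeasureTheory RealInnerProductSpace

section Aux
variable {α : Type*} [MeasurableSpace α] {μ : Measure α} {φ ψ : α → ℝ}

lemma inner_toLp (hφ : MemLp φ 2 μ) (hψ : MemLp ψ 2 μ) :
    ⟪hφ.toLp φ, hψ.toLp ψ⟫ = ∫ x, φ x * ψ x ∂μ := by
  rw [L2.inner_def]
  refine integral_congr_ae ?_
  filter_upwards [hφ.coeFn_toLp, hψ.coeFn_toLp] with x h1 h2
  simp [h1, h2, RCLike.inner_apply, mul_comm]

lemma norm_toLp_sq (hφ : MemLp φ 2 μ) :
    ‖hφ.toLp φ‖ ^ 2 = ∫ x, φ x ^ 2 ∂μ := by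
  rw [← real_inner_self_eq_norm_sq, inner_toLp hφ hφ]
  simp [sq]

lemma norm_toLp_eq (hφ : MemLp φ 2 μ) :
    ‖hφ.toLp φ‖ = Real.sqrt (∫ x, φ x ^ 2 ∂μ) := by
  rw [← norm_toLp_sq hφ, Real.sqrt_sq (norm_nonneg _)]

lemma myCS (hφ : MemLp φ 2 μ) (hψ : MemLp ψ 2 μ) :
    (∫ x, φ x * ψ x ∂μ) ^ 2 ≤ (∫ x, φ x ^ 2 ∂μ) * (∫ x, ψ x ^ 2 ∂μ) := by
  have h := real_inner_mul_inner_self_le (hφ.toLp φ) (hψ.toLp ψ)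
  rw [inner_toLp hφ hφ, inner_toLp hψ hψ, inner_toLp hφ hψ] at h
  calc (∫ x, φ x * ψ x ∂μ) ^ 2 = (∫ x, φ x * ψ x ∂μ) * (∫ x, φ x * ψ x ∂μ) := sq _
    _ ≤ (∫ x, φ x * φ x ∂μ) * (∫ x, ψ x * ψ x ∂μ) := h
    _ = (∫ x, φ x ^ 2 ∂μ) * (∫ x, ψ x ^ 2 ∂μ) := by simp [sq]

end Aux

section Ker
variable {E : Type*} [NormedAddCommGroup E] [MeasurableSpace E] [OpensMeasurableSpace E]
  {μ : Measure E} {H : E → ℝ} {C : ℝ} {w : E → ℝ}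

lemma kernel_cont (hHc : Continuous H) (hC : ∀ z, |H z| ≤ C) (hw : Integrable w μ) :
    Continuous fun x => ∫ y, H (x - y) * w y ∂μ := by
  refine continuous_of_dominated (bound := fun y => C * |w y|) ?_ ?_ (hw.abs.const_mul C) ?_
  · intro x
    exact (((hHc.comp (continuous_const.sub continuous_id)).stronglyMeasurable.aestronglyMeasurable).mul
      hw.1)
  · intro x
    filter_upwards with y
    rw [Real.norm_eq_abs, abs_mul]
    exact mul_le_mul_of_nonneg_right (hC _) (abs_nonneg _)
  · filter_upwards with y
    exact (hHc.comp (continuous_id.sub continuous_const)).mul continuous_const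

lemma kernel_integrand_int (hHc : Continuous H) (hC : ∀ z, |H z| ≤ C) (hw : Integrable w μ)
    (x : E) : Integrable (fun y => H (x - y) * w y) μ :=
  hw.bdd_mul ((hHc.comp (continuous_const.sub continuous_id)).stronglyMeasurable.aestronglyMeasurable)
    (c := C) (Filter.Eventually.of_forall fun y => by rw [Real.norm_eq_abs]; exact hC _)

lemma kernel_bound (hHc : Continuous H) (hC : ∀ z, |H z| ≤ C) (hw : Integrable w μ) (x : E) :
    |∫ y, H (x - y) * w y ∂μ| ≤ C * ∫ y, |w y| ∂μ := by
  calc |∫ y, H (x - y) * w y ∂μ| ≤ ∫ y, |H (x - y)| * |w y| ∂μ := by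
        simpa [Real.norm_eq_abs] using
          norm_integral_le_integral_norm (μ := μ) (fun y => H (x - y) * w y)
    _ ≤ ∫ y, C * |w y| ∂μ := by
        have h1 : Integrable (fun y => |H (x - y)| * |w y|) μ := by
          simpa [abs_mul] using (kernel_integrand_int hHc hC hw x).abs
        refine integral_mono h1 (hw.abs.const_mul C) ?_
        intro y
        exact mul_le_mul_of_nonneg_right (hC _) (abs_nonneg _)
    _ = C * ∫ y, |w y| ∂μ := integral_const_mul _ _
end Ker

section Expansion

variable {E : Type*} [NormedAddCommGroup E] [MeasurableSpace E] [OpensMeasurableSpace E]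
  [SecondCountableTopology E]

lemma expansion {μ : Measure E} [IsFiniteMeasure μ]
    {G : E → ℝ} (hGc : Continuous G) {CG : ℝ} (hCG : ∀ z, |G z| ≤ CG)
    (hGsym : ∀ p q : E, G (p - q) = G (q - p))
    {w : E → ℝ} (hw : MemLp w 2 μ) (hwsm : StronglyMeasurable w) :
    (∫ x, (∫ y, G (x - y) ∂μ) * w x ^ 2 ∂μ) - ∫ x, (∫ y, G (x - y) * w y ∂μ) * w x ∂μ
      = (1 / 2) * ∫ x, ∫ y, G (x - y) * (w x - w y) ^ 2 ∂μ ∂μ := by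
  have hCG0 : 0 ≤ CG := le_trans (abs_nonneg _) (hCG 0)
  have hInt : Integrable w μ := hw.integrable one_le_two
  have hSq : Integrable (fun x => w x ^ 2) μ := hw.integrable_sq
  have ia : ∀ x : E, Integrable (fun y => G (x - y) * w x ^ 2) μ := fun x =>
    (integrable_const _).bdd_mul
      ((hGc.comp (continuous_const.sub continuous_id)).stronglyMeasurable.aestronglyMeasurable)
      (c := CG) (Filter.Eventually.of_forall fun y => by rw [Real.norm_eq_abs]; exact hCG _)
  have ib : ∀ x : E, Integrable (fun y => G (x - y) * w y ^ 2) μ := fun x =>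
    kernel_integrand_int hGc hCG hSq x
  have ic : ∀ x : E, Integrable (fun y => 2 * (G (x - y) * w y * w x)) μ := fun x =>
    ((kernel_integrand_int hGc hCG hInt x).mul_const _).const_mul 2
  have hg0c : Continuous fun x : E => ∫ y, G (x - y) ∂μ := by
    simpa using kernel_cont (μ := μ) hGc hCG (integrable_const (1 : ℝ))
  have hg0bd : ∀ x : E, |∫ y, G (x - y) ∂μ| ≤ CG * (μ Set.univ).toReal := by
    intro x
    have := kernel_bound (μ := μ) hGc hCG (integrable_const (1 : ℝ)) x
    simpa [Measure.real] using this
  have Kc : Continuous fun x : E => ∫ y, G (x - y) * w y ∂μ := kernel_cont hGc hCG hInt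
  have K2c : Continuous fun x : E => ∫ y, G (x - y) * w y ^ 2 ∂μ := kernel_cont hGc hCG hSq
  have O1 : Integrable (fun x => (∫ y, G (x - y) ∂μ) * w x ^ 2) μ :=
    hSq.bdd_mul hg0c.stronglyMeasurable.aestronglyMeasurable
      (c := CG * (μ Set.univ).toReal) (Filter.Eventually.of_forall fun x => by rw [Real.norm_eq_abs]; exact hg0bd x)
  have O2 : Integrable (fun x => ∫ y, G (x - y) * w y ^ 2 ∂μ) μ := by
    refine Integrable.mono' (integrable_const (CG * ∫ y, |w y ^ 2| ∂μ))
      K2c.stronglyMeasurable.aestronglyMeasurable ?_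
    filter_upwards with x
    rw [Real.norm_eq_abs]
    exact kernel_bound hGc hCG hSq x
  have O3 : Integrable (fun x => (∫ y, G (x - y) * w y ∂μ) * w x) μ :=
    hInt.bdd_mul Kc.stronglyMeasurable.aestronglyMeasurable
      (c := CG * ∫ y, |w y| ∂μ) (Filter.Eventually.of_forall fun x => by rw [Real.norm_eq_abs]; exact kernel_bound hGc hCG hInt x)
  have hinner : ∀ x : E, (∫ y, G (x - y) * (w x - w y) ^ 2 ∂μ)
      = (∫ y, G (x - y) ∂μ) * w x ^ 2 + (∫ y, G (x - y) * w y ^ 2 ∂μ)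
        - 2 * ((∫ y, G (x - y) * w y ∂μ) * w x) := by
    intro x
    have hpt : ∀ y, G (x - y) * (w x - w y) ^ 2
        = G (x - y) * w x ^ 2 + G (x - y) * w y ^ 2 - 2 * (G (x - y) * w y * w x) := fun y => by
      ring
    calc (∫ y, G (x - y) * (w x - w y) ^ 2 ∂μ)
        = ∫ y, (G (x - y) * w x ^ 2 + G (x - y) * w y ^ 2 - 2 * (G (x - y) * w y * w x)) ∂μ :=
          integral_congr_ae (Filter.Eventually.of_forall hpt)
      _ = (∫ y, G (x - y) * w x ^ 2 ∂μ) + (∫ y, G (x - y) * w y ^ 2 ∂μ)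
            - ∫ y, 2 * (G (x - y) * w y * w x) ∂μ := by
          have hab : Integrable (fun y => G (x - y) * w x ^ 2 + G (x - y) * w y ^ 2) μ :=
            (ia x).add (ib x)
          rw [integral_sub hab (ic x), integral_add (ia x) (ib x)]
      _ = (∫ y, G (x - y) ∂μ) * w x ^ 2 + (∫ y, G (x - y) * w y ^ 2 ∂μ)
            - 2 * ((∫ y, G (x - y) * w y ∂μ) * w x) := by
          rw [integral_mul_const, integral_const_mul, integral_mul_const]
  have P2 : Integrable (fun p : E × E => G (p.1 - p.2) * w p.2 ^ 2) (μ.prod μ) := by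
    have hmw : StronglyMeasurable fun p : E × E => w p.2 :=
      hwsm.comp_measurable measurable_snd
    have hm2 : StronglyMeasurable fun p : E × E => w p.2 ^ 2 := by
      simpa [pow_two, Pi.mul_def] using hmw.mul hmw
    have hmG : StronglyMeasurable fun p : E × E => G (p.1 - p.2) :=
      (hGc.comp (continuous_fst.sub continuous_snd)).stronglyMeasurable
    have hb : Integrable (fun p : E × E => CG * w p.2 ^ 2) (μ.prod μ) :=
      (integrable_const (CG : ℝ)).mul_prod hSq
    refine Integrable.mono' hb (hmG.mul hm2).aestronglyMeasurable ?_
    filter_upwards with p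
    rw [Real.norm_eq_abs, abs_mul]
    have : |w p.2 ^ 2| = w p.2 ^ 2 := abs_of_nonneg (sq_nonneg _)
    rw [this]
    exact mul_le_mul_of_nonneg_right (hCG _) (sq_nonneg _)
  have hswap : (∫ x, ∫ y, G (x - y) * w y ^ 2 ∂μ ∂μ)
      = ∫ x, (∫ y, G (x - y) ∂μ) * w x ^ 2 ∂μ := by
    rw [integral_integral_swap P2]
    refine integral_congr_ae (Filter.Eventually.of_forall fun y => ?_)
    show (∫ x, G (x - y) * w y ^ 2 ∂μ) = (∫ x', G (y - x') ∂μ) * w y ^ 2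
    rw [integral_mul_const]
    congr 1
    exact integral_congr_ae (Filter.Eventually.of_forall fun x => hGsym x y)
  have hbig : (∫ x, ∫ y, G (x - y) * (w x - w y) ^ 2 ∂μ ∂μ)
      = (∫ x, (∫ y, G (x - y) ∂μ) * w x ^ 2 ∂μ) + (∫ x, ∫ y, G (x - y) * w y ^ 2 ∂μ ∂μ)
        - 2 * ∫ x, (∫ y, G (x - y) * w y ∂μ) * w x ∂μ := by
    have OA : Integrable
        (fun x => (∫ y, G (x - y) ∂μ) * w x ^ 2 + ∫ y, G (x - y) * w y ^ 2 ∂μ) μ := O1.add O2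
    have OC : Integrable (fun x => 2 * ((∫ y, G (x - y) * w y ∂μ) * w x)) μ := O3.const_mul 2
    rw [integral_congr_ae (Filter.Eventually.of_forall hinner),
      integral_sub OA OC, integral_add O1 O2, integral_const_mul]
  rw [hswap] at hbig
  linarith [hbig]


end Expansion

lemma le_of_sq_le_sq'' {a b : ℝ} (h : a ^ 2 ≤ b ^ 2) (hb : 0 ≤ b) : a ≤ b := by nlinarith

set_option maxHeartbeats 2000000 in
theorem nonlocal_main {E : Type*} [NormedAddCommGroup E] [MeasurableSpace E]
    [OpensMeasurableSpace E] [SecondCountableTopology E]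
    (μA μB : Measure E) [IsFiniteMeasure μA] [IsFiniteMeasure μB]
    (J G : E → ℝ)
    (hJc : Continuous J) (hGc : Continuous G)
    (hJ0 : ∀ z, 0 ≤ J z) (hG0 : ∀ z, 0 ≤ G z)
    (hJbd : ∃ C, ∀ z, J z ≤ C) (hGbd : ∃ C, ∀ z, G z ≤ C)
    (hGs : ∀ z, G (-z) = G z)
    (Cc : ℝ) (hCc : 0 < Cc)
    (hcoer : ∀ w : E → ℝ, MemLp w 2 μB →
      Cc * ∫ x, (w x) ^ 2 ∂μB ≤
        (1 / 2) * (∫ x, ∫ y, G (x - y) * (w x - w y) ^ 2 ∂μB ∂μB)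
          + ∫ x, (∫ y, J (x - y) ∂μA) * (w x) ^ 2 ∂μB)
    (u : E → ℝ) (hu : MemLp u 2 μA) :
    ∃ v : E → ℝ,
      MemLp v 2 μB ∧
      (∀ᵐ x ∂μB,
        0 = (∫ y, G (x - y) * (v y - v x) ∂μB) + ∫ y, J (x - y) * (u y - v x) ∂μA) ∧
      Real.sqrt (∫ x, (v x) ^ 2 ∂μB) ≤
        (1 / Cc) * Real.sqrt (∫ x, ∫ y, (J (x - y)) ^ 2 ∂μA ∂μB)
          * Real.sqrt (∫ x, (u x) ^ 2 ∂μA) ∧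
      (∀ v' : E → ℝ, MemLp v' 2 μB →
        (∀ᵐ x ∂μB,
          0 = (∫ y, G (x - y) * (v' y - v' x) ∂μB) + ∫ y, J (x - y) * (u y - v' x) ∂μA) →
        v' =ᵐ[μB] v) := by
  classical
  obtain ⟨CJ, hCJle⟩ := hJbd
  obtain ⟨CG, hCGle⟩ := hGbd
  have hCJ : ∀ z, |J z| ≤ CJ := fun z => by rw [abs_of_nonneg (hJ0 z)]; exact hCJle z
  have hCG : ∀ z, |G z| ≤ CG := fun z => by rw [abs_of_nonneg (hG0 z)]; exact hCGle z
  have hCJ0 : 0 ≤ CJ := (abs_nonneg _).trans (hCJ 0)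
  have hCG0 : 0 ≤ CG := (abs_nonneg _).trans (hCG 0)
  have hGsym : ∀ p q : E, G (p - q) = G (q - p) := fun p q => by
    rw [← hGs (q - p), neg_sub]
  have hu1 : Integrable u μA := hu.integrable one_le_two
  set vB : ℝ := (μB Set.univ).toReal with hvB
  set vA : ℝ := (μA Set.univ).toReal with hvA
  have hvB0 : 0 ≤ vB := ENNReal.toReal_nonneg
  have hvA0 : 0 ≤ vA := ENNReal.toReal_nonneg
  -- basic functions
  set g0 : E → ℝ := fun x => ∫ y, G (x - y) ∂μB with hg0
  set av : E → ℝ := fun x => ∫ y, J (x - y) ∂μA with hav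
  set bf : E → ℝ := fun x => g0 x + av x with hbf
  set Kf : (E → ℝ) → E → ℝ := fun w x => ∫ y, G (x - y) * w y ∂μB with hKf
  set ff : E → ℝ := fun x => ∫ y, J (x - y) * u y ∂μA with hff
  set gf : (E → ℝ) → E → ℝ := fun w x => bf x * w x - Kf w x with hgf
  -- continuity and bounds
  have hg0c : Continuous g0 := by
    rw [hg0]; simpa using kernel_cont (μ := μB) hGc hCG (integrable_const (1 : ℝ))
  have hg0bd : ∀ x, |g0 x| ≤ CG * vB := by
    intro x
    have := kernel_bound (μ := μB) hGc hCG (integrable_const (1 : ℝ)) x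
    simp only [hg0, hvB]
    simpa [Measure.real] using this
  have havc : Continuous av := by
    rw [hav]; simpa using kernel_cont (μ := μA) hJc hCJ (integrable_const (1 : ℝ))
  have havbd : ∀ x, |av x| ≤ CJ * vA := by
    intro x
    have := kernel_bound (μ := μA) hJc hCJ (integrable_const (1 : ℝ)) x
    simp only [hav, hvA]
    simpa [Measure.real] using this
  set Cb : ℝ := CG * vB + CJ * vA with hCb
  have hCb0 : 0 ≤ Cb := by positivity
  have hbfc : Continuous bf := by rw [hbf]; exact hg0c.add havc
  have hbfbd : ∀ x, |bf x| ≤ Cb := by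
    intro x
    rw [hbf, hCb]
    exact (abs_add_le _ _).trans (add_le_add (hg0bd x) (havbd x))
  have hffc : Continuous ff := by rw [hff]; exact kernel_cont hJc hCJ hu1
  have hffbd : ∀ x, |ff x| ≤ CJ * ∫ y, |u y| ∂μA := by
    intro x; rw [hff]; exact kernel_bound hJc hCJ hu1 x
  have hffmem : MemLp ff 2 μB := by
    refine MemLp.of_bound hffc.aestronglyMeasurable (CJ * ∫ y, |u y| ∂μA) ?_
    filter_upwards with x
    rw [Real.norm_eq_abs]; exact hffbd x
  -- Lp element basics
  have hWm : ∀ W : Lp ℝ 2 μB, MemLp (⇑W) 2 μB := fun W => Lp.memLp W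
  have hWint : ∀ W : Lp ℝ 2 μB, Integrable (⇑W) μB := fun W => (hWm W).integrable one_le_two
  have hWsq : ∀ W : Lp ℝ 2 μB, Integrable (fun x => (W : E → ℝ) x ^ 2) μB :=
    fun W => (hWm W).integrable_sq
  have hWsm : ∀ W : Lp ℝ 2 μB, StronglyMeasurable (⇑W) := fun W => Lp.stronglyMeasurable W
  -- kernel operator facts
  have hKfc : ∀ w : E → ℝ, Integrable w μB → Continuous (Kf w) := by
    intro w hw; rw [hKf]; exact kernel_cont hGc hCG hw
  have hKfbd : ∀ (w : E → ℝ), Integrable w μB → ∀ x, |Kf w x| ≤ CG * ∫ y, |w y| ∂μB := by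
    intro w hw x; rw [hKf]; exact kernel_bound hGc hCG hw x
  have hKfmem : ∀ w : E → ℝ, Integrable w μB → MemLp (Kf w) 2 μB := by
    intro w hw
    refine MemLp.of_bound (hKfc w hw).aestronglyMeasurable (CG * ∫ y, |w y| ∂μB) ?_
    filter_upwards with x
    rw [Real.norm_eq_abs]; exact hKfbd w hw x
  have hKfcongr : ∀ w w' : E → ℝ, w =ᵐ[μB] w' → Kf w = Kf w' := by
    intro w w' h
    have hpt : ∀ x, (∫ y, G (x - y) * w y ∂μB) = ∫ y, G (x - y) * w' y ∂μB := by
      intro x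
      refine integral_congr_ae (h.mono fun y hy => ?_)
      simp only [hy]
    simp only [hKf]
    funext x
    exact hpt x
  have hgfcongr : ∀ w w' : E → ℝ, w =ᵐ[μB] w' → gf w =ᵐ[μB] gf w' := by
    intro w w' h
    have hK := hKfcongr w w' h
    filter_upwards [h] with x hx
    rw [hgf]
    simp only [hx, hK]
  -- membership of gf and the operator S
  have hmb : ∀ W : Lp ℝ 2 μB, MemLp (fun x => bf x * (W : E → ℝ) x) 2 μB := by
    intro W
    refine MemLp.of_le_mul (c := Cb) (hWm W)
      (hbfc.stronglyMeasurable.aestronglyMeasurable.mul (Lp.aestronglyMeasurable W)) ?_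
    filter_upwards with x
    rw [Real.norm_eq_abs, Real.norm_eq_abs, abs_mul]
    exact mul_le_mul_of_nonneg_right (hbfbd x) (abs_nonneg _)
  have hgfmem : ∀ W : Lp ℝ 2 μB, MemLp (gf ⇑W) 2 μB := by
    intro W
    have : gf ⇑W = (fun x => bf x * (W : E → ℝ) x) - Kf ⇑W := by
      funext x; rw [hgf]; rfl
    rw [this]
    exact (hmb W).sub (hKfmem ⇑W (hWint W))
  set S : Lp ℝ 2 μB → Lp ℝ 2 μB := fun W => (hgfmem W).toLp (gf ⇑W) with hSdef
  have hScoe : ∀ W, ⇑(S W) =ᵐ[μB] gf ⇑W := fun W => MemLp.coeFn_toLp _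
  -- the pointwise equation rearrangement
  have heqn : ∀ w : E → ℝ, Integrable w μB → ∀ x,
      (∫ y, G (x - y) * (w y - w x) ∂μB) + (∫ y, J (x - y) * (u y - w x) ∂μA)
        = ff x - gf w x := by
    intro w hw x
    have iG1 : Integrable (fun y => G (x - y) * w y) μB := kernel_integrand_int hGc hCG hw x
    have iG2 : Integrable (fun y => G (x - y) * w x) μB :=
      (integrable_const (w x)).bdd_mul
        ((hGc.comp (continuous_const.sub continuous_id)).stronglyMeasurable.aestronglyMeasurable)
        (c := CG) (Filter.Eventually.of_forall fun y => by rw [Real.norm_eq_abs]; exact hCG _)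
    have iJ1 : Integrable (fun y => J (x - y) * u y) μA := kernel_integrand_int hJc hCJ hu1 x
    have iJ2 : Integrable (fun y => J (x - y) * w x) μA :=
      (integrable_const (w x)).bdd_mul
        ((hJc.comp (continuous_const.sub continuous_id)).stronglyMeasurable.aestronglyMeasurable)
        (c := CJ) (Filter.Eventually.of_forall fun y => by rw [Real.norm_eq_abs]; exact hCJ _)
    have e1 : (∫ y, G (x - y) * (w y - w x) ∂μB)
        = Kf w x - g0 x * w x := by
      simp only [mul_sub]
      rw [integral_sub iG1 iG2, integral_mul_const]
    have e2 : (∫ y, J (x - y) * (u y - w x) ∂μA)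
        = ff x - av x * w x := by
      simp only [mul_sub]
      rw [integral_sub iJ1 iJ2, integral_mul_const]
    rw [e1, e2, hgf, hbf]
    ring
  -- S is "additive" in the needed sense
  have hSsub : ∀ V W : Lp ℝ 2 μB, S V - S W = S (V - W) := by
    intro V W
    have h1 : ⇑(S V - S W) =ᵐ[μB] gf ⇑V - gf ⇑W :=
      (Lp.coeFn_sub _ _).trans ((hScoe V).sub (hScoe W))
    have h4 : ∀ x, gf (⇑V - ⇑W) x = gf ⇑V x - gf ⇑W x := by
      intro x
      have hKs : Kf (⇑V - ⇑W) x = Kf ⇑V x - Kf ⇑W x := by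
        simp only [hKf, Pi.sub_apply, mul_sub]
        exact integral_sub (kernel_integrand_int hGc hCG (hWint V) x)
          (kernel_integrand_int hGc hCG (hWint W) x)
      simp only [hgf, Pi.sub_apply, hKs]
      ring
    have h2 : ⇑(S (V - W)) =ᵐ[μB] gf (⇑V - ⇑W) :=
      (hScoe _).trans (hgfcongr _ _ (Lp.coeFn_sub V W))
    have h5 : (gf ⇑V - gf ⇑W) =ᵐ[μB] gf (⇑V - ⇑W) :=
      Filter.Eventually.of_forall fun x => (h4 x).symm
    exact Lp.ext (h1.trans (h5.trans h2.symm))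
  -- norms and inner products
  have hnormsq : ∀ W : Lp ℝ 2 μB, ‖W‖ ^ 2 = ∫ x, (W : E → ℝ) x ^ 2 ∂μB := by
    intro W
    have := norm_toLp_sq (hWm W)
    rwa [Lp.toLp_coeFn W (hWm W)] at this
  have hinnerS : ∀ V W : Lp ℝ 2 μB, ⟪V, W⟫ = ∫ x, (V : E → ℝ) x * (W : E → ℝ) x ∂μB := by
    intro V W
    have := inner_toLp (hWm V) (hWm W)
    rwa [Lp.toLp_coeFn V (hWm V), Lp.toLp_coeFn W (hWm W)] at this
  -- coercivity of S
  have hcoerS : ∀ W : Lp ℝ 2 μB, Cc * ‖W‖ ^ 2 ≤ ⟪S W, W⟫ := by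
    intro W
    have hc := hcoer ⇑W (hWm W)
    have hexp := expansion hGc hCG hGsym (hWm W) (hWsm W)
    have int2 : Integrable (fun x => Kf ⇑W x * (W : E → ℝ) x) μB :=
      (hWint W).bdd_mul (hKfc ⇑W (hWint W)).stronglyMeasurable.aestronglyMeasurable
        (c := CG * ∫ y, |(W : E → ℝ) y| ∂μB) (Filter.Eventually.of_forall fun x => by
          rw [Real.norm_eq_abs]; exact hKfbd ⇑W (hWint W) x)
    have O1 : Integrable (fun x => g0 x * (W : E → ℝ) x ^ 2) μB :=
      (hWsq W).bdd_mul hg0c.stronglyMeasurable.aestronglyMeasurable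
        (c := CG * vB) (Filter.Eventually.of_forall fun x => by rw [Real.norm_eq_abs]; exact hg0bd x)
    have O2 : Integrable (fun x => av x * (W : E → ℝ) x ^ 2) μB :=
      (hWsq W).bdd_mul havc.stronglyMeasurable.aestronglyMeasurable
        (c := CJ * vA) (Filter.Eventually.of_forall fun x => by rw [Real.norm_eq_abs]; exact havbd x)
    have c1 : ⟪S W, W⟫ = ∫ x, gf ⇑W x * (W : E → ℝ) x ∂μB := by
      rw [hinnerS (S W) W]
      refine integral_congr_ae ?_
      filter_upwards [hScoe W] with x hx
      rw [hx]
    have OA : Integrable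
        (fun x => g0 x * (W : E → ℝ) x ^ 2 + av x * (W : E → ℝ) x ^ 2) μB := O1.add O2
    have c2 : (∫ x, gf ⇑W x * (W : E → ℝ) x ∂μB)
        = (∫ x, g0 x * (W : E → ℝ) x ^ 2 ∂μB) + (∫ x, av x * (W : E → ℝ) x ^ 2 ∂μB)
          - ∫ x, Kf ⇑W x * (W : E → ℝ) x ∂μB := by
      have hpt : ∀ x, gf ⇑W x * (W : E → ℝ) x
          = (g0 x * (W : E → ℝ) x ^ 2 + av x * (W : E → ℝ) x ^ 2)
            - Kf ⇑W x * (W : E → ℝ) x := by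
        intro x; rw [hgf, hbf]; ring
      rw [integral_congr_ae (Filter.Eventually.of_forall hpt), integral_sub OA int2,
        integral_add O1 O2]
    have hexp' : (∫ x, g0 x * (W : E → ℝ) x ^ 2 ∂μB) - (∫ x, Kf ⇑W x * (W : E → ℝ) x ∂μB)
        = (1 / 2) * ∫ x, ∫ y, G (x - y) * ((W : E → ℝ) x - (W : E → ℝ) y) ^ 2 ∂μB ∂μB := by
      simp only [hg0, hKf]
      exact hexp
    have hc' : Cc * ∫ x, (W : E → ℝ) x ^ 2 ∂μB ≤
        (1 / 2) * (∫ x, ∫ y, G (x - y) * ((W : E → ℝ) x - (W : E → ℝ) y) ^ 2 ∂μB ∂μB)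
          + ∫ x, av x * (W : E → ℝ) x ^ 2 ∂μB := by
      simpa only [hav] using hc
    rw [hnormsq W, c1, c2]
    linarith [hexp', hc']
  -- norm bound for S
  set M0 : ℝ := Cb + CG * vB with hM0
  have hM00 : 0 ≤ M0 := by positivity
  have hSnorm : ∀ W : Lp ℝ 2 μB, ‖S W‖ ≤ M0 * ‖W‖ := by
    intro W
    have hX : MemLp (fun x => bf x * (W : E → ℝ) x) 2 μB := hmb W
    have hY : MemLp (Kf ⇑W) 2 μB := hKfmem ⇑W (hWint W)
    have hdecomp : S W = hX.toLp _ - hY.toLp _ := by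
      refine Lp.ext ?_
      have h1 : ⇑(hX.toLp _ - hY.toLp _) =ᵐ[μB] (fun x => bf x * (W : E → ℝ) x) - Kf ⇑W :=
        (Lp.coeFn_sub _ _).trans ((MemLp.coeFn_toLp _).sub (MemLp.coeFn_toLp _))
      refine (hScoe W).trans (Filter.EventuallyEq.trans ?_ h1.symm)
      refine Filter.Eventually.of_forall fun x => ?_
      rw [hgf]; rfl
    have hXn : ‖hX.toLp _‖ ≤ Cb * ‖W‖ := by
      refine le_of_sq_le_sq'' ?_ (by positivity)
      rw [norm_toLp_sq, mul_pow]
      calc (∫ x, (bf x * (W : E → ℝ) x) ^ 2 ∂μB)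
          ≤ ∫ x, Cb ^ 2 * (W : E → ℝ) x ^ 2 ∂μB := by
            refine integral_mono hX.integrable_sq ((hWsq W).const_mul _) fun x => ?_
            rw [mul_pow]
            refine mul_le_mul_of_nonneg_right ?_ (sq_nonneg _)
            obtain ⟨hl, hr⟩ := abs_le.mp (hbfbd x)
            exact sq_le_sq' hl hr
        _ = Cb ^ 2 * ∫ x, (W : E → ℝ) x ^ 2 ∂μB := integral_const_mul _ _
        _ = Cb ^ 2 * ‖W‖ ^ 2 := by rw [← hnormsq W]
    have hIa : (∫ y, |(W : E → ℝ) y| ∂μB) ^ 2 ≤ vB * ∫ x, (W : E → ℝ) x ^ 2 ∂μB := by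
      have habs : MemLp (fun x => |(W : E → ℝ) x|) 2 μB := by
        simpa [Real.norm_eq_abs] using (hWm W).norm
      have hcs := myCS habs (memLp_const (1 : ℝ))
      simp only [mul_one, sq_abs, one_pow, integral_const, smul_eq_mul] at hcs
      calc (∫ y, |(W : E → ℝ) y| ∂μB) ^ 2
          ≤ (∫ x, (W : E → ℝ) x ^ 2 ∂μB) * (μB Set.univ).toReal := hcs
        _ = vB * ∫ x, (W : E → ℝ) x ^ 2 ∂μB := by rw [← hvB]; ring
    have hI0 : 0 ≤ ∫ y, |(W : E → ℝ) y| ∂μB := integral_nonneg fun y => abs_nonneg _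
    have hYn : ‖hY.toLp _‖ ≤ CG * vB * ‖W‖ := by
      refine le_of_sq_le_sq'' ?_ (by positivity)
      rw [norm_toLp_sq]
      have hIb : (∫ x, Kf ⇑W x ^ 2 ∂μB)
          ≤ vB * (CG * ∫ y, |(W : E → ℝ) y| ∂μB) ^ 2 := by
        calc (∫ x, Kf ⇑W x ^ 2 ∂μB)
            ≤ ∫ _x, (CG * ∫ y, |(W : E → ℝ) y| ∂μB) ^ 2 ∂μB := by
              refine integral_mono hY.integrable_sq (integrable_const _) fun x => ?_
              obtain ⟨hl, hr⟩ := abs_le.mp (hKfbd ⇑W (hWint W) x)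
              exact sq_le_sq' hl hr
          _ = vB * (CG * ∫ y, |(W : E → ℝ) y| ∂μB) ^ 2 := by
              simp only [integral_const, smul_eq_mul, hvB, Measure.real]
      calc (∫ x, Kf ⇑W x ^ 2 ∂μB)
          ≤ vB * (CG * ∫ y, |(W : E → ℝ) y| ∂μB) ^ 2 := hIb
        _ ≤ vB * (CG ^ 2 * (vB * ∫ x, (W : E → ℝ) x ^ 2 ∂μB)) := by
            refine mul_le_mul_of_nonneg_left ?_ hvB0
            rw [mul_pow]
            exact mul_le_mul_of_nonneg_left hIa (sq_nonneg CG)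
        _ = (CG * vB * ‖W‖) ^ 2 := by rw [← hnormsq W]; ring
    calc ‖S W‖ = ‖hX.toLp _ - hY.toLp _‖ := by rw [hdecomp]
      _ ≤ ‖hX.toLp _‖ + ‖hY.toLp _‖ := norm_sub_le _ _
      _ ≤ Cb * ‖W‖ + CG * vB * ‖W‖ := add_le_add hXn hYn
      _ = M0 * ‖W‖ := by rw [hM0]; ring
  -- contraction setup
  set M : ℝ := M0 + Cc with hM
  have hMpos : 0 < M := by positivity
  have hCcM : Cc ≤ M := by rw [hM]; linarith
  have hM2 : (0 : ℝ) < M ^ 2 := by positivity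
  set τ : ℝ := Cc / M ^ 2 with hτ
  have hτ0 : 0 < τ := by rw [hτ]; positivity
  set kr : ℝ := Real.sqrt (1 - Cc ^ 2 / M ^ 2) with hkr
  have hfrac0 : 0 ≤ 1 - Cc ^ 2 / M ^ 2 := by
    rw [sub_nonneg, div_le_one hM2]
    exact pow_le_pow_left₀ hCc.le hCcM 2
  have hfrac1 : 1 - Cc ^ 2 / M ^ 2 < 1 := by
    have : 0 < Cc ^ 2 / M ^ 2 := by positivity
    linarith
  have hkr0 : 0 ≤ kr := Real.sqrt_nonneg _
  have hkr1 : kr < 1 := by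
    rw [hkr]
    calc Real.sqrt (1 - Cc ^ 2 / M ^ 2) < Real.sqrt 1 := Real.sqrt_lt_sqrt hfrac0 hfrac1
      _ = 1 := Real.sqrt_one
  clear_value M0 M τ kr
  have hkey : ∀ W : Lp ℝ 2 μB, ‖W - τ • S W‖ ≤ kr * ‖W‖ := by
    intro W
    refine le_of_sq_le_sq'' ?_ (by positivity)
    have e1 : ‖W - τ • S W‖ ^ 2
        = ‖W‖ ^ 2 - 2 * (τ * ⟪S W, W⟫) + τ ^ 2 * ‖S W‖ ^ 2 := by
      rw [norm_sub_sq_real, real_inner_smul_right, norm_smul, Real.norm_eq_abs,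
        abs_of_pos hτ0, mul_pow, real_inner_comm W (S W)]
    have e2 : (kr * ‖W‖) ^ 2 = (1 - Cc ^ 2 / M ^ 2) * ‖W‖ ^ 2 := by
      rw [mul_pow, hkr, Real.sq_sqrt hfrac0]
    rw [e1, e2]
    have h1 : Cc * ‖W‖ ^ 2 ≤ ⟪S W, W⟫ := hcoerS W
    have h2 : ‖S W‖ ≤ M * ‖W‖ := by
      refine (hSnorm W).trans (mul_le_mul_of_nonneg_right ?_ (norm_nonneg _))
      rw [hM]; linarith
    have h3 : τ ^ 2 * ‖S W‖ ^ 2 ≤ τ ^ 2 * (M * ‖W‖) ^ 2 := by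
      refine mul_le_mul_of_nonneg_left ?_ (sq_nonneg _)
      exact pow_le_pow_left₀ (norm_nonneg _) h2 2
    have h4 : τ * (Cc * ‖W‖ ^ 2) ≤ τ * ⟪S W, W⟫ :=
      mul_le_mul_of_nonneg_left h1 hτ0.le
    have h5 : τ ^ 2 * (M * ‖W‖) ^ 2 = Cc ^ 2 / M ^ 2 * ‖W‖ ^ 2 := by
      rw [hτ]; field_simp
    have h6 : τ * (Cc * ‖W‖ ^ 2) = Cc ^ 2 / M ^ 2 * ‖W‖ ^ 2 := by
      rw [hτ]; field_simp
    nlinarith [h3, h4, h5, h6]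
  set fLp : Lp ℝ 2 μB := hffmem.toLp ff with hfLp
  set Φ : Lp ℝ 2 μB → Lp ℝ 2 μB := fun W => W + τ • (fLp - S W) with hΦ
  have hΦdiff : ∀ V W, Φ V - Φ W = (V - W) - τ • S (V - W) := by
    intro V W
    rw [hΦ]
    simp only
    rw [← hSsub V W]
    simp only [smul_sub]
    abel
  haveI : Nonempty (Lp ℝ 2 μB) := ⟨0⟩
  have hlip : LipschitzWith (Real.toNNReal kr) Φ := by
    refine LipschitzWith.of_dist_le_mul fun V W => ?_
    rw [dist_eq_norm, dist_eq_norm, Real.coe_toNNReal kr hkr0]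
    calc ‖Φ V - Φ W‖ = ‖(V - W) - τ • S (V - W)‖ := by rw [hΦdiff V W]
      _ ≤ kr * ‖V - W‖ := hkey _
  have hcontr : ContractingWith (Real.toNNReal kr) Φ :=
    ⟨by rw [← NNReal.coe_lt_coe]; push_cast; rw [Real.coe_toNNReal kr hkr0]; exact hkr1, hlip⟩
  set V : Lp ℝ 2 μB := ContractingWith.fixedPoint Φ hcontr with hV
  have hfix : Φ V = V := hcontr.fixedPoint_isFixedPt
  have hSV : S V = fLp := by
    have h0 : τ • (fLp - S V) = 0 := by
      have h := hfix
      rw [hΦ] at h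
      simp only at h
      exact add_eq_left.mp h
    rcases smul_eq_zero.mp h0 with h | h
    · exact absurd h hτ0.ne'
    · exact (sub_eq_zero.mp h).symm
  refine ⟨⇑V, hWm V, ?_, ?_, ?_⟩
  · -- the equation
    have hveq : gf ⇑V =ᵐ[μB] ff := by
      refine (hScoe V).symm.trans ?_
      rw [hSV]
      exact hffmem.coeFn_toLp
    filter_upwards [hveq] with x hx
    rw [heqn ⇑V (hWint V) x, hx, sub_self]
  · -- the estimate
    have h1 := hcoerS V
    rw [hSV] at h1
    have h2 : ⟪fLp, V⟫ ≤ ‖fLp‖ * ‖V‖ := real_inner_le_norm _ _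
    have h3 : Cc * ‖V‖ ≤ ‖fLp‖ := by
      rcases (norm_nonneg V).eq_or_lt' with h | h
      · rw [h, mul_zero]; exact norm_nonneg _
      · nlinarith [h1, h2]
    have hfn : ‖fLp‖ = Real.sqrt (∫ x, ff x ^ 2 ∂μB) := by
      rw [hfLp]; exact norm_toLp_eq hffmem
    have hJx2mem : ∀ x, MemLp (fun y => J (x - y)) 2 μA := fun x =>
      MemLp.of_bound
        ((hJc.comp (continuous_const.sub continuous_id)).stronglyMeasurable.aestronglyMeasurable)
        CJ (Filter.Eventually.of_forall fun y => by rw [Real.norm_eq_abs]; exact hCJ _)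
    have hptCS : ∀ x, ff x ^ 2 ≤ (∫ y, J (x - y) ^ 2 ∂μA) * ∫ y, u y ^ 2 ∂μA := by
      intro x
      have := myCS (hJx2mem x) hu
      rw [hff]
      exact this
    have hJsqc : Continuous fun z => J z ^ 2 := hJc.pow 2
    have hJsqbd : ∀ z, |J z ^ 2| ≤ CJ ^ 2 := fun z => by
      rw [abs_of_nonneg (sq_nonneg _)]
      exact pow_le_pow_left₀ (hJ0 z) (hCJle z) 2
    have hJ2c : Continuous fun x => ∫ y, J (x - y) ^ 2 ∂μA := by
      simpa using kernel_cont (μ := μA) hJsqc hJsqbd (integrable_const (1 : ℝ))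
    have hJ2bd : ∀ x, |∫ y, J (x - y) ^ 2 ∂μA| ≤ CJ ^ 2 * vA := by
      intro x
      have := kernel_bound (μ := μA) hJsqc hJsqbd (integrable_const (1 : ℝ)) x
      simp only [hvA]
      simpa [Measure.real] using this
    have hintJ2 : Integrable (fun x => (∫ y, J (x - y) ^ 2 ∂μA) * ∫ y, u y ^ 2 ∂μA) μB := by
      refine Integrable.mono' (integrable_const (CJ ^ 2 * vA * |∫ y, u y ^ 2 ∂μA|))
        ((hJ2c.mul continuous_const).stronglyMeasurable.aestronglyMeasurable) ?_
      filter_upwards with x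
      rw [Real.norm_eq_abs, abs_mul]
      exact mul_le_mul_of_nonneg_right (hJ2bd x) (abs_nonneg _)
    have hff2 : (∫ x, ff x ^ 2 ∂μB)
        ≤ (∫ x, ∫ y, J (x - y) ^ 2 ∂μA ∂μB) * ∫ y, u y ^ 2 ∂μA := by
      calc (∫ x, ff x ^ 2 ∂μB)
          ≤ ∫ x, (∫ y, J (x - y) ^ 2 ∂μA) * ∫ y, u y ^ 2 ∂μA ∂μB :=
            integral_mono hffmem.integrable_sq hintJ2 hptCS
        _ = (∫ x, ∫ y, J (x - y) ^ 2 ∂μA ∂μB) * ∫ y, u y ^ 2 ∂μA := integral_mul_const _ _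
    have hVnorm : Real.sqrt (∫ x, (V : E → ℝ) x ^ 2 ∂μB) = ‖V‖ := by
      rw [← hnormsq V, Real.sqrt_sq (norm_nonneg _)]
    rw [hVnorm]
    have hJJ0 : 0 ≤ ∫ x, ∫ y, J (x - y) ^ 2 ∂μA ∂μB :=
      integral_nonneg fun x => integral_nonneg fun y => sq_nonneg _
    have h5 : ‖fLp‖ ≤ Real.sqrt ((∫ x, ∫ y, J (x - y) ^ 2 ∂μA ∂μB) * ∫ y, u y ^ 2 ∂μA) := by
      rw [hfn]; exact Real.sqrt_le_sqrt hff2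
    rw [Real.sqrt_mul hJJ0] at h5
    calc ‖V‖ ≤ ‖fLp‖ / Cc := by rw [le_div_iff₀ hCc]; linarith [h3]
      _ ≤ (Real.sqrt (∫ x, ∫ y, J (x - y) ^ 2 ∂μA ∂μB) * Real.sqrt (∫ y, u y ^ 2 ∂μA)) / Cc :=
          (div_le_div_iff_of_pos_right hCc).mpr h5
      _ = 1 / Cc * Real.sqrt (∫ x, ∫ y, J (x - y) ^ 2 ∂μA ∂μB)
            * Real.sqrt (∫ x, u x ^ 2 ∂μA) := by ring
  · -- uniqueness
    intro v' hv' heq'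
    have hv'int : Integrable v' μB := hv'.integrable one_le_two
    have hgf' : gf v' =ᵐ[μB] ff := by
      filter_upwards [heq'] with x hx
      have h := heqn v' hv'int x
      rw [h] at hx
      linarith [hx]
    have hSV' : S (hv'.toLp v') = fLp := by
      refine Lp.ext ?_
      refine (hScoe _).trans ?_
      refine (hgfcongr _ _ hv'.coeFn_toLp).trans ?_
      exact hgf'.trans hffmem.coeFn_toLp.symm
    have hzero : S (hv'.toLp v' - V) = 0 := by
      rw [← hSsub, hSV', hSV, sub_self]
    have hVV : hv'.toLp v' = V := by
      have h := hcoerS (hv'.toLp v' - V)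
      rw [hzero] at h
      simp only [inner_zero_left] at h
      have hsq : ‖hv'.toLp v' - V‖ ^ 2 ≤ 0 := by nlinarith [h, hCc]
      have hsq0 : ‖hv'.toLp v' - V‖ ^ 2 = 0 := le_antisymm hsq (sq_nonneg _)
      have hn : ‖hv'.toLp v' - V‖ = 0 := by
        have := sq_eq_zero_iff.mp hsq0
        exact this
      exact sub_eq_zero.mp (norm_eq_zero.mp hn)
    calc v' =ᵐ[μB] ⇑(hv'.toLp v') := hv'.coeFn_toLp.symm
      _ =ᵐ[μB] ⇑V := by rw [hVV]

/-- Existence and uniqueness (via Lax–Milgram) for the nonlocal elliptic equation: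
under the coercivity hypothesis with constant `Cc > 0`, for every `u ∈ L²(A)` there is a
unique `v ∈ L²(B)` solving `0 = ∫_B G(x-y)(v(y)-v(x)) dy + ∫_A J(x-y)(u(y)-v(x)) dy` a.e.,
together with the estimate `‖v‖_{L²(B)} ≤ (1/Cc) (∬ J²)^{1/2} ‖u‖_{L²(A)}`. -/
theorem stmt_2 {N : ℕ} (A B : Set (EuclideanSpace ℝ (Fin N)))
    (hAm : MeasurableSet A) (hBm : MeasurableSet B)
    (hAb : Bornology.IsBounded A) (hBb : Bornology.IsBounded B)
    (J G : EuclideanSpace ℝ (Fin N) → ℝ)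
    (hJc : Continuous J) (hGc : Continuous G)
    (hJ0 : ∀ z, 0 ≤ J z) (hG0 : ∀ z, 0 ≤ G z)
    (hJbd : ∃ C, ∀ z, J z ≤ C) (hGbd : ∃ C, ∀ z, G z ≤ C)
    (hJs : ∀ z, J (-z) = J z) (hGs : ∀ z, G (-z) = G z)
    (Cc : ℝ) (hCc : 0 < Cc)
    (hcoer : ∀ w : EuclideanSpace ℝ (Fin N) → ℝ, MemLp w 2 (volume.restrict B) →
      Cc * ∫ x in B, (w x) ^ 2 ≤
        (1 / 2) * (∫ x in B, ∫ y in B, G (x - y) * (w x - w y) ^ 2)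
          + ∫ x in B, (∫ y in A, J (x - y)) * (w x) ^ 2)
    (u : EuclideanSpace ℝ (Fin N) → ℝ) (hu : MemLp u 2 (volume.restrict A)) :
    ∃ v : EuclideanSpace ℝ (Fin N) → ℝ,
      MemLp v 2 (volume.restrict B) ∧
      (∀ᵐ x ∂(volume.restrict B),
        0 = (∫ y in B, G (x - y) * (v y - v x)) + ∫ y in A, J (x - y) * (u y - v x)) ∧
      Real.sqrt (∫ x in B, (v x) ^ 2) ≤
        (1 / Cc) * Real.sqrt (∫ x in B, ∫ y in A, (J (x - y)) ^ 2)
          * Real.sqrt (∫ x in A, (u x) ^ 2) ∧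
      (∀ v' : EuclideanSpace ℝ (Fin N) → ℝ, MemLp v' 2 (volume.restrict B) →
        (∀ᵐ x ∂(volume.restrict B),
          0 = (∫ y in B, G (x - y) * (v' y - v' x)) + ∫ y in A, J (x - y) * (u y - v' x)) →
        v' =ᵐ[volume.restrict B] v) := by
  haveI : IsFiniteMeasure (volume.restrict A) :=
    ⟨by rw [Measure.restrict_apply_univ]; exact hAb.measure_lt_top⟩
  haveI : IsFiniteMeasure (volume.restrict B) :=
    ⟨by rw [Measure.restrict_apply_univ]; exact hBb.measure_lt_top⟩
  exact nonlocal_main (volume.restrict A) (volume.restrict B) J G hJc hGc hJ0 hG0 hJbd hGbd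
    hGs Cc hCc hcoer u hu
end

section
/- Let $B$ be a bounded connected open subset of $\mathbb{R}^N$, $G$ a nonnegative continuous symmetric kernel with $G(0) > 0$, and $a(x) = \int_A J(x-y)\,dy$ where $J$ is nonnegative continuous with $\operatorname{dist}(A,B)$ smaller than the radius of the support of $J$ (so $a \not\equiv 0$ on $B$). Then there exists a constant $C_c > 0$ such that for every $v \in L^2(B)$, $$\frac{1}{2}\int_B\int_B G(x-y)(v(x)-v(y))^2\,dx\,dy + \int_B a(x)v(x)^2\,dx \geq C_c\|v\|_{L^2(B)}^2.$$ -/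
open MeasureTheory ENNReal


private lemma lintegral_biUnion_finset_le' {α ι : Type*} [MeasurableSpace α] (μ : MeasureTheory.Measure α)
    (s : Finset ι) (t : ι → Set α) (f : α → ENNReal) :
    ∫⁻ x in ⋃ i ∈ s, t i, f x ∂μ ≤ ∑ i ∈ s, ∫⁻ x in t i, f x ∂μ := by
  classical
  induction s using Finset.induction with
  | empty => simp
  | insert a s' h ih =>
    rw [Finset.set_biUnion_insert, Finset.sum_insert h]
    calc ∫⁻ x in t a ∪ ⋃ i ∈ s', t i, f x ∂μ
        ≤ ∫⁻ x in t a, f x ∂μ + ∫⁻ x in ⋃ i ∈ s', t i, f x ∂μ := by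
          refine le_trans (MeasureTheory.lintegral_mono' (MeasureTheory.Measure.restrict_union_le _ _) le_rfl) ?_
          rw [MeasureTheory.lintegral_add_measure]
      _ ≤ _ := add_le_add_right ih _

section
variable {N : ℕ}
local notation "E" => EuclideanSpace ℝ (Fin N)

private lemma step_lemma (B U V : Set E) (hU : U ⊆ B) (hV : V ⊆ B)
    (hVpos : 0 < volume V) (hVfin : volume V ≠ ⊤)
    (G : E → ℝ) (hGc : Continuous G) (δ : ℝ) (hδ : 0 < δ)
    (hGδ : ∀ x ∈ U, ∀ y ∈ V, δ ≤ G (x - y)) (v : E → ℝ) (hv : Measurable v) :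
    ∫⁻ x in U, ENNReal.ofReal (v x ^ 2) ≤
      (volume V)⁻¹ * (ENNReal.ofReal (2/δ) *
          (∫⁻ x in B, ∫⁻ y in B, ENNReal.ofReal (G (x - y) * (v x - v y) ^ 2))
        + 2 * volume U * ∫⁻ y in V, ENNReal.ofReal (v y ^ 2)) := by
  set n : E → ℝ≥0∞ := fun x => ENNReal.ofReal (v x ^ 2) with hn
  have hnm : Measurable n := ENNReal.measurable_ofReal.comp ((hv.pow_const 2))
  set g2 : E → E → ℝ≥0∞ := fun x y => ENNReal.ofReal (G (x - y) * (v x - v y) ^ 2) with hg2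
  have hg2m : Measurable (Function.uncurry g2) := by
    apply ENNReal.measurable_ofReal.comp
    exact ((hGc.measurable.comp (measurable_fst.sub measurable_snd)).mul
      (((hv.comp measurable_fst).sub (hv.comp measurable_snd)).pow_const 2))
  have hg2mx : ∀ x : E, Measurable (g2 x) := fun x => hg2m.comp measurable_prodMk_left
  have hFm : Measurable (fun x => ∫⁻ y in V, g2 x y) :=
    Measurable.lintegral_prod_right' hg2m
  -- pointwise bound for x ∈ U
  have key_pt : ∀ x ∈ U, volume V * n x ≤
      ENNReal.ofReal (2/δ) * (∫⁻ y in V, g2 x y) + 2 * ∫⁻ y in V, n y := by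
    intro x hx
    have h1 : volume V * n x = ∫⁻ _ in V, n x := by rw [setLIntegral_const, mul_comm]
    rw [h1]
    calc ∫⁻ _ in V, n x
        ≤ ∫⁻ y in V, (ENNReal.ofReal (2/δ) * g2 x y + 2 * n y) := by
          refine setLIntegral_mono
            ((measurable_const.mul (hg2mx x)).add (measurable_const.mul hnm)) ?_
          intro y hy
          have hG : δ ≤ G (x - y) := hGδ x hx y hy
          have hr : v x ^ 2 ≤ 2/δ * (G (x - y) * (v x - v y) ^ 2) + 2 * v y ^ 2 := by
            have e1 : 2 * (v x - v y) ^ 2 ≤ 2/δ * (G (x - y) * (v x - v y) ^ 2) := by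
              rw [div_mul_eq_mul_div, le_div_iff₀ hδ]
              nlinarith [sq_nonneg (v x - v y)]
            nlinarith [sq_nonneg (v x - 2 * v y)]
          have hnn1 : 0 ≤ 2/δ * (G (x - y) * (v x - v y) ^ 2) :=
            mul_nonneg (by positivity) (mul_nonneg (le_trans hδ.le hG) (sq_nonneg _))
          have e2 : ENNReal.ofReal (2/δ * (G (x - y) * (v x - v y) ^ 2))
              = ENNReal.ofReal (2/δ) * g2 x y := ENNReal.ofReal_mul (by positivity)
          have e3 : ENNReal.ofReal (2 * v y ^ 2) = 2 * n y := by
            rw [ENNReal.ofReal_mul (by norm_num : (0:ℝ) ≤ 2), ENNReal.ofReal_ofNat]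
          calc n x ≤ ENNReal.ofReal (2/δ * (G (x - y) * (v x - v y) ^ 2) + 2 * v y ^ 2) :=
                ENNReal.ofReal_le_ofReal hr
            _ = ENNReal.ofReal (2/δ) * g2 x y + 2 * n y := by
                rw [ENNReal.ofReal_add hnn1 (by positivity), e2, e3]
      _ = ENNReal.ofReal (2/δ) * (∫⁻ y in V, g2 x y) + 2 * ∫⁻ y in V, n y := by
          rw [lintegral_add_left ((hg2mx x).const_mul _),
            lintegral_const_mul _ (hg2mx x), lintegral_const_mul _ hnm]
  calc ∫⁻ x in U, n x
      = (volume V)⁻¹ * ∫⁻ x in U, volume V * n x := by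
        rw [lintegral_const_mul _ hnm, ← mul_assoc, ENNReal.inv_mul_cancel hVpos.ne' hVfin,
          one_mul]
    _ ≤ (volume V)⁻¹ * ∫⁻ x in U,
          (ENNReal.ofReal (2/δ) * (∫⁻ y in V, g2 x y) + 2 * ∫⁻ y in V, n y) :=
        mul_le_mul_right (setLIntegral_mono
          ((measurable_const.mul hFm).add measurable_const) key_pt) _
    _ = (volume V)⁻¹ * (ENNReal.ofReal (2/δ) * (∫⁻ x in U, (∫⁻ y in V, g2 x y))
          + (2 * ∫⁻ y in V, n y) * volume U) := by
        rw [lintegral_add_left (hFm.const_mul _), lintegral_const_mul _ hFm,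
          setLIntegral_const]
    _ ≤ (volume V)⁻¹ * (ENNReal.ofReal (2/δ) * (∫⁻ x in B, (∫⁻ y in B, g2 x y))
          + (2 * ∫⁻ y in V, n y) * volume U) := by
        gcongr
    _ = _ := by
        have : (2 * ∫⁻ y in V, n y) * volume U = 2 * volume U * ∫⁻ y in V, n y := by
          rw [mul_assoc, mul_comm (∫⁻ y in V, n y) (volume U), ← mul_assoc]
        rw [this]

private lemma a_continuous (A : Set E) (hAm : MeasurableSet A) (hAb : Bornology.IsBounded A)
    (J : E → ℝ) (hJc : Continuous J) : Continuous fun x => ∫ y in A, J (x - y) := by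
  rw [continuous_iff_continuousAt]
  intro x₀
  have hKA : IsCompact (closure A) :=
    Metric.isCompact_of_isClosed_isBounded isClosed_closure hAb.closure
  have hKB : IsCompact (Metric.closedBall x₀ 1) := isCompact_closedBall x₀ 1
  have hKK : IsCompact (Metric.closedBall x₀ 1 ×ˢ closure A) := hKB.prod hKA
  have hcont : ContinuousOn (fun p : E × E => J (p.1 - p.2))
      (Metric.closedBall x₀ 1 ×ˢ closure A) :=
    (hJc.comp (continuous_fst.sub continuous_snd)).continuousOn
  obtain ⟨M, hM⟩ := hKK.exists_bound_of_continuousOn hcont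
  have hAfin : volume A < ⊤ := hAb.measure_lt_top
  refine continuousAt_of_dominated (bound := fun _ => M) ?_ ?_ ?_ ?_
  · exact Filter.Eventually.of_forall fun x =>
      ((hJc.comp (continuous_const.sub continuous_id)).aestronglyMeasurable)
  · filter_upwards [Metric.closedBall_mem_nhds x₀ one_pos] with x hx
    filter_upwards [ae_restrict_mem hAm] with y hy
    exact hM (x, y) ⟨hx, subset_closure hy⟩
  · rw [MeasureTheory.integrable_const_iff]
    right
    exact ⟨by rwa [Measure.restrict_apply_univ]⟩
  · exact Filter.Eventually.of_forall fun y =>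
      (hJc.comp (continuous_id.sub continuous_const)).continuousAt


private lemma key_bound (B : Set E) (hBo : IsOpen B) (hBc : IsConnected B)
    (hBb : Bornology.IsBounded B)
    (G : E → ℝ) (hGc : Continuous G) (hGpos : 0 < G 0)
    (a : E → ℝ) (hac : Continuous a) (x₀ : E) (hx₀B : x₀ ∈ B) (hax₀ : 0 < a x₀) :
    ∃ C : ℝ≥0∞, C ≠ ⊤ ∧ ∀ v : E → ℝ, Measurable v →
      (∫⁻ x in B, ENNReal.ofReal (v x ^ 2)) ≤
        C * ((∫⁻ x in B, ∫⁻ y in B, ENNReal.ofReal (G (x - y) * (v x - v y) ^ 2))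
          + ∫⁻ x in B, ENNReal.ofReal (a x * v x ^ 2)) := by
  classical
  set δ : ℝ := G 0 / 2 with hδdef
  have hδpos : 0 < δ := by positivity
  -- radius r where G ≥ δ
  obtain ⟨r, hrpos, hrG⟩ : ∃ r > (0:ℝ), ∀ z : E, dist z 0 ≤ r → δ ≤ G z := by
    obtain ⟨η, hηpos, hη⟩ := Metric.continuousAt_iff.mp hGc.continuousAt δ hδpos
    refine ⟨η / 2, by positivity, fun z hz => ?_⟩
    have hd : dist z 0 < η := lt_of_le_of_lt hz (by linarith)
    have h1 := hη (x := z) hd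
    rw [Real.dist_eq] at h1
    have h2 := (abs_lt.mp h1).1
    have hδeq : δ = G 0 / 2 := hδdef
    linarith
  -- ball around x₀ where a is large, inside B
  set α : ℝ := a x₀ / 2 with hαdef
  have hαpos : 0 < α := by positivity
  obtain ⟨ρ₀, hρ₀pos, hρ₀⟩ : ∃ ρ₀ > (0:ℝ), Metric.ball x₀ ρ₀ ⊆ B ∩ a ⁻¹' Set.Ioi α := by
    have hopen : IsOpen (B ∩ a ⁻¹' Set.Ioi α) := hBo.inter (isOpen_Ioi.preimage hac)
    have hmem : x₀ ∈ B ∩ a ⁻¹' Set.Ioi α := ⟨hx₀B, by simp [hαdef]; linarith⟩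
    exact Metric.isOpen_iff.mp hopen x₀ hmem
  set ρ : ℝ := min ρ₀ (r / 4) with hρdef
  have hρpos : 0 < ρ := lt_min hρ₀pos (by positivity)
  have hρr : ρ ≤ r / 4 := min_le_right _ _
  have hρρ₀ : ρ ≤ ρ₀ := min_le_left _ _
  -- compact closure and finite cover
  set K : Set E := closure B with hKdef
  have hKc : IsCompact K := Metric.isCompact_of_isClosed_isBounded isClosed_closure hBb.closure
  have hKcover : K ⊆ ⋃ z : K, Metric.ball (z : E) ρ := by
    intro x hx
    exact Set.mem_iUnion.mpr ⟨⟨x, hx⟩, Metric.mem_ball_self hρpos⟩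
  obtain ⟨t, ht⟩ := hKc.elim_finite_subcover (fun z : K => Metric.ball (z : E) ρ)
    (fun _ => Metric.isOpen_ball) hKcover
  set T : Finset E := insert x₀ (t.image Subtype.val) with hTdef
  have hTK : ∀ z ∈ T, z ∈ K := by
    intro z hz
    rcases Finset.mem_insert.mp hz with h | h
    · exact h ▸ subset_closure hx₀B
    · obtain ⟨w, _, hw⟩ := Finset.mem_image.mp h
      exact hw ▸ w.2
  have hx₀T : x₀ ∈ T := Finset.mem_insert_self _ _
  have hcover : K ⊆ ⋃ z ∈ T, Metric.ball z ρ := by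
    intro x hx
    obtain ⟨w, hw⟩ := Set.mem_iUnion.mp (ht hx)
    simp only [Set.mem_iUnion] at hw
    obtain ⟨hwt, hxw⟩ := hw
    exact Set.mem_biUnion (Finset.mem_insert_of_mem (Finset.mem_image_of_mem _ hwt)) hxw
  -- reachability relation
  set Rel : E → E → Prop := fun z w => z ∈ T ∧ w ∈ T ∧
    (Metric.ball z ρ ∩ Metric.ball w ρ ∩ K).Nonempty with hReldef
  have hreach : ∀ z ∈ T, Relation.ReflTransGen Rel x₀ z := by
    by_contra hcon
    push_neg at hcon
    obtain ⟨z₁, hz₁T, hz₁⟩ := hcon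
    set U₂ : Set E := ⋃ w ∈ {w ∈ (T : Set E) | ¬ Relation.ReflTransGen Rel x₀ w},
      Metric.ball w ρ with hU₂def
    set U₁ : Set E := ⋃ w ∈ {w ∈ (T : Set E) | Relation.ReflTransGen Rel x₀ w},
      Metric.ball w ρ with hU₁def
    have hU₁o : IsOpen U₁ := isOpen_biUnion fun _ _ => Metric.isOpen_ball
    have hU₂o : IsOpen U₂ := isOpen_biUnion fun _ _ => Metric.isOpen_ball
    have hKsub : K ⊆ U₁ ∪ U₂ := by
      intro x hx
      obtain ⟨w, hw⟩ := Set.mem_iUnion.mp (hcover hx)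
      simp only [Set.mem_iUnion] at hw
      obtain ⟨hwT, hxw⟩ := hw
      by_cases hr : Relation.ReflTransGen Rel x₀ w
      · exact Or.inl (Set.mem_biUnion ⟨hwT, hr⟩ hxw)
      · exact Or.inr (Set.mem_biUnion ⟨hwT, hr⟩ hxw)
    have hK1 : (K ∩ U₁).Nonempty :=
      ⟨x₀, subset_closure hx₀B, Set.mem_biUnion ⟨hx₀T, Relation.ReflTransGen.refl⟩
        (Metric.mem_ball_self hρpos)⟩
    have hK2 : (K ∩ U₂).Nonempty :=
      ⟨z₁, hTK z₁ hz₁T, Set.mem_biUnion ⟨hz₁T, hz₁⟩ (Metric.mem_ball_self hρpos)⟩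
    have hpre : IsPreconnected K := hBc.closure.isPreconnected
    obtain ⟨p, hpK, hp1, hp2⟩ := hpre U₁ U₂ hU₁o hU₂o hKsub hK1 hK2
    simp only [hU₁def, hU₂def, Set.mem_iUnion, Set.mem_setOf_eq] at hp1 hp2
    obtain ⟨w₁, ⟨hw₁T, hw₁r⟩, hpw₁⟩ := hp1
    obtain ⟨w₂, ⟨hw₂T, hw₂r⟩, hpw₂⟩ := hp2
    exact hw₂r (hw₁r.tail ⟨hw₁T, hw₂T, ⟨p, ⟨hpw₁, hpw₂⟩, hpK⟩⟩)
  -- per-node bound by induction on reachability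
  have hnode : ∀ z, Relation.ReflTransGen Rel x₀ z →
      ∃ C : ℝ≥0∞, C ≠ ⊤ ∧ ∀ v : E → ℝ, Measurable v →
        (∫⁻ x in B ∩ Metric.ball z ρ, ENNReal.ofReal (v x ^ 2)) ≤
          C * ((∫⁻ x in B, ∫⁻ y in B, ENNReal.ofReal (G (x - y) * (v x - v y) ^ 2))
            + ∫⁻ x in B, ENNReal.ofReal (a x * v x ^ 2)) := by
    intro z hz
    induction hz with
    | refl =>
      refine ⟨(ENNReal.ofReal α)⁻¹, ENNReal.inv_ne_top.mpr (by simp [ENNReal.ofReal_pos, hαpos]), ?_⟩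
      intro v hv
      have hsub : B ∩ Metric.ball x₀ ρ ⊆ a ⁻¹' Set.Ioi α := fun x hx =>
        (hρ₀ (Metric.ball_subset_ball hρρ₀ hx.2)).2
      calc ∫⁻ x in B ∩ Metric.ball x₀ ρ, ENNReal.ofReal (v x ^ 2)
          ≤ ∫⁻ x in B ∩ Metric.ball x₀ ρ,
              (ENNReal.ofReal α)⁻¹ * ENNReal.ofReal (a x * v x ^ 2) := by
            refine setLIntegral_mono (measurable_const.mul
              (ENNReal.measurable_ofReal.comp (hac.measurable.mul (hv.pow_const 2)))) ?_
            intro x hx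
            have hax : α ≤ a x := le_of_lt (hsub hx)
            have h1 : ENNReal.ofReal α * ENNReal.ofReal (v x ^ 2)
                ≤ ENNReal.ofReal (a x * v x ^ 2) := by
              rw [← ENNReal.ofReal_mul hαpos.le]
              exact ENNReal.ofReal_le_ofReal (by nlinarith [sq_nonneg (v x)])
            calc ENNReal.ofReal (v x ^ 2)
                = (ENNReal.ofReal α)⁻¹ * (ENNReal.ofReal α * ENNReal.ofReal (v x ^ 2)) := by
                  rw [← mul_assoc, ENNReal.inv_mul_cancel (by simp [ENNReal.ofReal_pos, hαpos])
                    ENNReal.ofReal_ne_top, one_mul]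
              _ ≤ (ENNReal.ofReal α)⁻¹ * ENNReal.ofReal (a x * v x ^ 2) :=
                  mul_le_mul_right h1 _
        _ = (ENNReal.ofReal α)⁻¹ *
              ∫⁻ x in B ∩ Metric.ball x₀ ρ, ENNReal.ofReal (a x * v x ^ 2) :=
            lintegral_const_mul _ (ENNReal.measurable_ofReal.comp (hac.measurable.mul (hv.pow_const 2)))
        _ ≤ (ENNReal.ofReal α)⁻¹ * ∫⁻ x in B, ENNReal.ofReal (a x * v x ^ 2) :=
            mul_le_mul_right (lintegral_mono'
              (Measure.restrict_mono Set.inter_subset_left le_rfl) le_rfl) _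
        _ ≤ _ := mul_le_mul_right le_add_self _
    | tail hb hrel ih =>
      rename_i b c
      obtain ⟨Cb, hCbne, hCb⟩ := ih
      obtain ⟨hbT, hcT, p, ⟨hpb, hpc⟩, hpK⟩ := hrel
      set U : Set E := B ∩ Metric.ball c ρ with hUdef
      set V : Set E := B ∩ Metric.ball b ρ with hVdef
      have hVne : V.Nonempty := by
        have : b ∈ K → True := fun _ => trivial
        obtain ⟨q, hq1, hq2⟩ := _root_.mem_closure_iff.mp hpK (Metric.ball b ρ)
          Metric.isOpen_ball hpb
        exact ⟨q, hq2, hq1⟩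
      have hVpos : 0 < volume V := (hBo.inter Metric.isOpen_ball).measure_pos volume hVne
      have hVfin : volume V ≠ ⊤ :=
        (lt_of_le_of_lt (measure_mono Set.inter_subset_left) hBb.measure_lt_top).ne
      have hUfin : volume U ≠ ⊤ :=
        (lt_of_le_of_lt (measure_mono Set.inter_subset_left) hBb.measure_lt_top).ne
      have hGδ : ∀ x ∈ U, ∀ y ∈ V, δ ≤ G (x - y) := by
        intro x hx y hy
        have hbc : dist b c < 2 * ρ := by
          calc dist b c ≤ dist b p + dist p c := dist_triangle _ _ _
            _ < ρ + ρ := add_lt_add (Metric.mem_ball'.mp hpb) (Metric.mem_ball.mp hpc)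
            _ = 2 * ρ := by ring
        have hxy : dist x y ≤ r := le_of_lt <| by
          have h1 : dist x c < ρ := Metric.mem_ball.mp hx.2
          have h2 : dist y b < ρ := Metric.mem_ball.mp hy.2
          calc dist x y ≤ dist x c + dist c b + dist b y := dist_triangle4 _ _ _ _
            _ < ρ + 2 * ρ + ρ := by
                refine add_lt_add (add_lt_add h1 ?_) ?_
                · rw [dist_comm]; exact hbc
                · rw [dist_comm]; exact h2
            _ = 4 * ρ := by ring
            _ ≤ r := by linarith
        refine hrG (x - y) ?_
        rwa [dist_zero_right, ← dist_eq_norm]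
      have hstep := step_lemma B U V Set.inter_subset_left Set.inter_subset_left
        hVpos hVfin G hGc δ hδpos hGδ
      refine ⟨(volume V)⁻¹ * (ENNReal.ofReal (2/δ) + 2 * volume U * Cb), ?_, ?_⟩
      · refine ENNReal.mul_ne_top (ENNReal.inv_ne_top.mpr hVpos.ne') ?_
        refine ENNReal.add_ne_top.mpr ⟨ENNReal.ofReal_ne_top, ?_⟩
        exact ENNReal.mul_ne_top (ENNReal.mul_ne_top (by simp) hUfin) hCbne
      · intro v hv
        set Dl := ∫⁻ x in B, ∫⁻ y in B, ENNReal.ofReal (G (x - y) * (v x - v y) ^ 2) with hDl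
        set El := ∫⁻ x in B, ENNReal.ofReal (a x * v x ^ 2) with hEl
        calc ∫⁻ x in U, ENNReal.ofReal (v x ^ 2)
            ≤ (volume V)⁻¹ * (ENNReal.ofReal (2/δ) * Dl
                + 2 * volume U * ∫⁻ y in V, ENNReal.ofReal (v y ^ 2)) := hstep v hv
          _ ≤ (volume V)⁻¹ * (ENNReal.ofReal (2/δ) * (Dl + El)
                + 2 * volume U * (Cb * (Dl + El))) := by
              gcongr
              · exact le_self_add
              · exact hCb v hv
          _ = (volume V)⁻¹ * (ENNReal.ofReal (2/δ) + 2 * volume U * Cb) * (Dl + El) := by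
              ring
  -- combine over the finite cover
  have hQall : ∀ z : E, ∃ C : ℝ≥0∞, C ≠ ⊤ ∧ (z ∈ T → ∀ v : E → ℝ, Measurable v →
      (∫⁻ x in B ∩ Metric.ball z ρ, ENNReal.ofReal (v x ^ 2)) ≤
        C * ((∫⁻ x in B, ∫⁻ y in B, ENNReal.ofReal (G (x - y) * (v x - v y) ^ 2))
          + ∫⁻ x in B, ENNReal.ofReal (a x * v x ^ 2))) := by
    intro z
    by_cases hz : z ∈ T
    · obtain ⟨C, h1, h2⟩ := hnode z (hreach z hz)
      exact ⟨C, h1, fun _ => h2⟩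
    · exact ⟨0, by simp, fun h => absurd h hz⟩
  choose Cf hCf1 hCf2 using hQall
  refine ⟨∑ z ∈ T, Cf z, ?_, ?_⟩
  · exact (ENNReal.sum_lt_top.mpr fun z _ => (hCf1 z).lt_top).ne
  · intro v hv
    have hBsub : B ⊆ ⋃ z ∈ T, (B ∩ Metric.ball z ρ) := by
      intro x hx
      obtain ⟨w, hw⟩ := Set.mem_iUnion.mp (hcover (subset_closure hx))
      simp only [Set.mem_iUnion] at hw
      obtain ⟨hwT, hxw⟩ := hw
      exact Set.mem_biUnion hwT ⟨hx, hxw⟩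
    calc ∫⁻ x in B, ENNReal.ofReal (v x ^ 2)
        ≤ ∫⁻ x in ⋃ z ∈ T, (B ∩ Metric.ball z ρ), ENNReal.ofReal (v x ^ 2) :=
          lintegral_mono' (Measure.restrict_mono hBsub le_rfl) le_rfl
      _ ≤ ∑ z ∈ T, ∫⁻ x in B ∩ Metric.ball z ρ, ENNReal.ofReal (v x ^ 2) :=
          lintegral_biUnion_finset_le' volume T _ _
      _ ≤ ∑ z ∈ T, Cf z * ((∫⁻ x in B, ∫⁻ y in B, ENNReal.ofReal (G (x - y) * (v x - v y) ^ 2))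
            + ∫⁻ x in B, ENNReal.ofReal (a x * v x ^ 2)) :=
          Finset.sum_le_sum fun z hz => hCf2 z hz v hv
      _ = _ := by rw [← Finset.sum_mul]


/-- Coercivity of the nonlocal bilinear form: if `B` is a bounded connected open set,
`G` is a nonnegative continuous symmetric kernel with `G 0 > 0`, `J` is nonnegative
continuous and `a(x) = ∫_A J(x-y) dy` is positive on a subset of `B` of positive measure,
then there is `Cc > 0` with
`(1/2) ∬_{B×B} G(x-y)(v(x)-v(y))² + ∫_B a v² ≥ Cc ‖v‖²_{L²(B)}` for all `v ∈ L²(B)`. -/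
theorem stmt_3 {N : ℕ} (A B : Set (EuclideanSpace ℝ (Fin N)))
    (hAm : MeasurableSet A) (hAb : Bornology.IsBounded A)
    (hBo : IsOpen B) (hBc : IsConnected B) (hBb : Bornology.IsBounded B)
    (J G : EuclideanSpace ℝ (Fin N) → ℝ)
    (hJc : Continuous J) (hGc : Continuous G)
    (hJ0 : ∀ z, 0 ≤ J z) (hG0 : ∀ z, 0 ≤ G z)
    (hJs : ∀ z, J (-z) = J z) (hGs : ∀ z, G (-z) = G z)
    (hGpos : 0 < G 0)
    (hapos : 0 < volume {x | x ∈ B ∧ 0 < ∫ y in A, J (x - y)}) :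
    ∃ Cc > (0 : ℝ), ∀ v : EuclideanSpace ℝ (Fin N) → ℝ,
      MemLp v 2 (volume.restrict B) →
      Cc * ∫ x in B, (v x) ^ 2 ≤
        (1 / 2) * (∫ x in B, ∫ y in B, G (x - y) * (v x - v y) ^ 2)
          + ∫ x in B, (∫ y in A, J (x - y)) * (v x) ^ 2 := by
  classical
  set a : EuclideanSpace ℝ (Fin N) → ℝ := fun x => ∫ y in A, J (x - y) with hadef
  have hax : ∀ x : EuclideanSpace ℝ (Fin N), (∫ y in A, J (x - y)) = a x := fun x => by rw [hadef]
  have hacont : Continuous a := a_continuous A hAm hAb J hJc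
  have ha0 : ∀ x, 0 ≤ a x := fun x => by
    rw [hadef]; exact integral_nonneg fun y => hJ0 _
  obtain ⟨x₀, hx₀B, hax₀⟩ : ∃ x₀, x₀ ∈ B ∧ 0 < a x₀ := by
    obtain ⟨x₀, hx₀⟩ := MeasureTheory.nonempty_of_measure_ne_zero hapos.ne'
    exact ⟨x₀, hx₀.1, by rw [← hax]; exact hx₀.2⟩
  obtain ⟨C, hCne, hC⟩ := key_bound B hBo hBc hBb G hGc hGpos a hacont x₀ hx₀B hax₀
  -- bounds for G and a on relevant compact sets
  obtain ⟨R, hR⟩ := hBb.subset_closedBall 0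
  have hR0 : 0 ≤ 2 * R := by
    have := hR hx₀B
    rw [Metric.mem_closedBall] at this
    have := dist_nonneg.trans this
    linarith
  obtain ⟨MG, hMG⟩ := (isCompact_closedBall (0 : EuclideanSpace ℝ (Fin N)) (2 * R)).exists_bound_of_continuousOn
    hGc.continuousOn
  have hMG0 : 0 ≤ MG :=
    le_trans (abs_nonneg _) (hMG 0 (by rw [Metric.mem_closedBall, dist_self]; exact hR0))
  have hMGB : ∀ x ∈ B, ∀ y ∈ B, G (x - y) ≤ MG := by
    intro x hx y hy
    have hball : x - y ∈ Metric.closedBall (0 : EuclideanSpace ℝ (Fin N)) (2 * R) := by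
      rw [Metric.mem_closedBall, dist_zero_right]
      calc ‖x - y‖ ≤ ‖x‖ + ‖y‖ := norm_sub_le _ _
        _ ≤ R + R := by
            have h1 := hR hx; have h2 := hR hy
            rw [Metric.mem_closedBall, dist_zero_right] at h1 h2
            exact add_le_add h1 h2
        _ = 2 * R := by ring
    exact le_trans (le_abs_self _) (hMG _ hball)
  have hKB : IsCompact (closure B) :=
    Metric.isCompact_of_isClosed_isBounded isClosed_closure hBb.closure
  obtain ⟨Ma, hMa⟩ := hKB.exists_bound_of_continuousOn hacont.continuousOn
  have hMaB : ∀ x ∈ B, a x ≤ Ma := fun x hx =>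
    le_trans (le_abs_self _) (hMa x (subset_closure hx))
  have hMa0 : 0 ≤ Ma := le_trans (abs_nonneg _) (hMa x₀ (subset_closure hx₀B))
  have hBfin : volume B ≠ ⊤ := hBb.measure_lt_top.ne
  -- the constant
  refine ⟨1 / (2 * (C.toReal + 1)), by positivity, ?_⟩
  intro v hvL2
  set g : EuclideanSpace ℝ (Fin N) → ℝ := hvL2.aestronglyMeasurable.mk v with hgdef
  have hvg : v =ᵐ[volume.restrict B] g := hvL2.aestronglyMeasurable.ae_eq_mk
  have hgm : Measurable g := hvL2.aestronglyMeasurable.stronglyMeasurable_mk.measurable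
  have hgL2 : MemLp g 2 (volume.restrict B) := hvL2.ae_eq hvg
  set n : EuclideanSpace ℝ (Fin N) → ℝ≥0∞ := fun x => ENNReal.ofReal (g x ^ 2) with hndef
  have hnm : Measurable n := ENNReal.measurable_ofReal.comp (hgm.pow_const 2)
  set Nl : ℝ≥0∞ := ∫⁻ x in B, n x with hNl
  set Dl : ℝ≥0∞ := ∫⁻ x in B, ∫⁻ y in B, ENNReal.ofReal (G (x - y) * (g x - g y) ^ 2) with hDl
  set El : ℝ≥0∞ := ∫⁻ x in B, ENNReal.ofReal (a x * g x ^ 2) with hEl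
  have hmain : Nl ≤ C * (Dl + El) := hC g hgm
  -- finiteness
  have hNfin : Nl ≠ ⊤ := hgL2.integrable_sq.lintegral_lt_top.ne
  have hg2m : Measurable (Function.uncurry
      fun x y => ENNReal.ofReal (G (x - y) * (g x - g y) ^ 2)) := by
    apply ENNReal.measurable_ofReal.comp
    exact ((hGc.measurable.comp (measurable_fst.sub measurable_snd)).mul
      (((hgm.comp measurable_fst).sub (hgm.comp measurable_snd)).pow_const 2))
  have hFm : Measurable (fun x => ∫⁻ y in B, ENNReal.ofReal (G (x - y) * (g x - g y) ^ 2)) :=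
    Measurable.lintegral_prod_right' hg2m
  set c2 : ℝ≥0∞ := ENNReal.ofReal (2 * MG) with hc2def
  have hDfin : Dl ≠ ⊤ := by
    have hinner : ∀ x : EuclideanSpace ℝ (Fin N), (∫⁻ y in B, (c2 * n x + c2 * n y))
        = (c2 * volume B) * n x + c2 * Nl := by
      intro x
      rw [lintegral_add_left measurable_const, setLIntegral_const,
        lintegral_const_mul _ hnm, mul_right_comm]
    have hbound : Dl ≤ (c2 * volume B) * Nl + (c2 * Nl) * volume B := by
      calc Dl ≤ ∫⁻ x in B, ∫⁻ y in B, (c2 * n x + c2 * n y) := by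
            refine setLIntegral_mono (Measurable.lintegral_prod_right'
              ((measurable_const.mul (hnm.comp measurable_fst)).add
                (measurable_const.mul (hnm.comp measurable_snd)))) ?_
            intro x hx
            refine setLIntegral_mono (measurable_const.add (measurable_const.mul hnm)) ?_
            intro y hy
            have h1 : G (x - y) * (g x - g y) ^ 2 ≤ 2 * MG * g x ^ 2 + 2 * MG * g y ^ 2 := by
              have h2 := hMGB x hx y hy
              nlinarith [sq_nonneg (g x - g y), sq_nonneg (g x + g y), hG0 (x - y),
                sq_nonneg (g x), sq_nonneg (g y)]
            calc ENNReal.ofReal (G (x - y) * (g x - g y) ^ 2)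
                ≤ ENNReal.ofReal (2 * MG * g x ^ 2 + 2 * MG * g y ^ 2) :=
                  ENNReal.ofReal_le_ofReal h1
              _ = c2 * n x + c2 * n y := by
                  rw [ENNReal.ofReal_add (by positivity) (by positivity), hc2def, hndef]
                  congr 1
                  · exact ENNReal.ofReal_mul (by positivity)
                  · exact ENNReal.ofReal_mul (by positivity)
        _ = ∫⁻ x in B, ((c2 * volume B) * n x + c2 * Nl) := by
            exact lintegral_congr fun x => hinner x
        _ = (c2 * volume B) * Nl + (c2 * Nl) * volume B := by
            rw [lintegral_add_left (hnm.const_mul _),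
              lintegral_const_mul _ hnm, setLIntegral_const]
    refine (lt_of_le_of_lt hbound ?_).ne
    have hc2ne : c2 ≠ ⊤ := ENNReal.ofReal_ne_top
    exact ENNReal.add_lt_top.mpr ⟨ENNReal.mul_lt_top
      (ENNReal.mul_lt_top hc2ne.lt_top hBfin.lt_top) hNfin.lt_top,
      ENNReal.mul_lt_top (ENNReal.mul_lt_top hc2ne.lt_top hNfin.lt_top) hBfin.lt_top⟩
  have hEfin : El ≠ ⊤ := by
    have hbound : El ≤ ENNReal.ofReal Ma * Nl := by
      calc El ≤ ∫⁻ x in B, ENNReal.ofReal Ma * n x := by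
            refine setLIntegral_mono (measurable_const.mul hnm) ?_
            intro x hx
            calc ENNReal.ofReal (a x * g x ^ 2)
                ≤ ENNReal.ofReal (Ma * g x ^ 2) :=
                  ENNReal.ofReal_le_ofReal
                    (mul_le_mul_of_nonneg_right (hMaB x hx) (sq_nonneg _))
              _ = ENNReal.ofReal Ma * n x := ENNReal.ofReal_mul hMa0
        _ = ENNReal.ofReal Ma * Nl := lintegral_const_mul _ hnm
    refine (lt_of_le_of_lt hbound ?_).ne
    exact ENNReal.mul_lt_top ENNReal.ofReal_ne_top.lt_top hNfin.lt_top
  -- conversion of the real integrals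
  have ev1 : (∫ x in B, v x ^ 2) = ∫ x in B, g x ^ 2 :=
    integral_congr_ae (hvg.mono fun x hx => by simp only [hx])
  have ev2 : (∫ x in B, a x * v x ^ 2) = ∫ x in B, a x * g x ^ 2 :=
    integral_congr_ae (hvg.mono fun x hx => by simp only [hx])
  have ev3 : (∫ x in B, ∫ y in B, G (x - y) * (v x - v y) ^ 2)
      = ∫ x in B, ∫ y in B, G (x - y) * (g x - g y) ^ 2 := by
    refine integral_congr_ae ?_
    filter_upwards [hvg] with x hx
    refine integral_congr_ae (hvg.mono fun y hy => ?_)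
    simp only [hx, hy]
  have e1 : (∫ x in B, g x ^ 2) = Nl.toReal := by
    rw [hNl, hndef]
    exact integral_eq_lintegral_of_nonneg_ae (Filter.Eventually.of_forall fun x => sq_nonneg _)
      (hgm.pow_const 2).aestronglyMeasurable
  have e2 : (∫ x in B, a x * g x ^ 2) = El.toReal := by
    rw [hEl]
    exact integral_eq_lintegral_of_nonneg_ae
      (Filter.Eventually.of_forall fun x => mul_nonneg (ha0 x) (sq_nonneg _))
      (hacont.measurable.mul (hgm.pow_const 2)).aestronglyMeasurable
  have e3 : (∫ x in B, ∫ y in B, G (x - y) * (g x - g y) ^ 2) = Dl.toReal := by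
    have hFae : ∀ᵐ x ∂(volume.restrict B),
        (∫⁻ y in B, ENNReal.ofReal (G (x - y) * (g x - g y) ^ 2)) < ⊤ := by
      refine ae_lt_top hFm ?_
      rw [← hDl]; exact hDfin
    have hinner_eq : ∀ x : EuclideanSpace ℝ (Fin N), (∫ y in B, G (x - y) * (g x - g y) ^ 2)
        = (∫⁻ y in B, ENNReal.ofReal (G (x - y) * (g x - g y) ^ 2)).toReal := by
      intro x
      exact integral_eq_lintegral_of_nonneg_ae
        (Filter.Eventually.of_forall fun y => mul_nonneg (hG0 _) (sq_nonneg _))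
        (((hGc.comp (continuous_const.sub continuous_id)).measurable).mul
          ((measurable_const.sub hgm).pow_const 2)).aestronglyMeasurable
    calc (∫ x in B, ∫ y in B, G (x - y) * (g x - g y) ^ 2)
        = ∫ x in B, (∫⁻ y in B, ENNReal.ofReal (G (x - y) * (g x - g y) ^ 2)).toReal := by
          exact integral_congr_ae (Filter.Eventually.of_forall fun x => hinner_eq x)
      _ = Dl.toReal := by
          rw [hDl]
          exact integral_toReal hFm.aemeasurable hFae
  -- final arithmetic
  have hDEfin : C * (Dl + El) ≠ ⊤ :=
    ENNReal.mul_ne_top hCne (ENNReal.add_ne_top.mpr ⟨hDfin, hEfin⟩)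
  have hreal : Nl.toReal ≤ C.toReal * (Dl.toReal + El.toReal) := by
    have h := ENNReal.toReal_mono hDEfin hmain
    rwa [ENNReal.toReal_mul, ENNReal.toReal_add hDfin hEfin] at h
  have hc0 : 0 ≤ C.toReal := ENNReal.toReal_nonneg
  have hD0 : 0 ≤ Dl.toReal := ENNReal.toReal_nonneg
  have hE0 : 0 ≤ El.toReal := ENNReal.toReal_nonneg
  simp only [hax]
  rw [ev1, ev2, ev3, e1, e2, e3]
  rw [div_mul_eq_mul_div, div_le_iff₀ (by positivity)]
  nlinarith [hreal, hc0, hD0, hE0]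

end
end

section
/- Under the coercivity hypothesis with constant $C_c > 0$, the solution map $T_{AB}: L^2(A) \to L^2(B)$, assigning to $u$ the unique solution $v$ of the nonlocal elliptic equation $0 = \int_B G(x-y)(v(y)-v(x))\,dy + \int_A J(x-y)(u(y)-v(x))\,dy$, is Lipschitz: for all $u_1, u_2 \in L^2(A)$, $$\|T_{AB}(u_1) - T_{AB}(u_2)\|_{L^2(B)} \leq \frac{1}{C_c}\left(\int_B\int_A J(x-y)^2\,dy\,dx\right)^{1/2}\|u_1 - u_2\|_{L^2(A)}.$$ -/
open MeasureTheory

lemma my_int_mul {α : Type*} {m : MeasurableSpace α} {μ : Measure α} {f g : α → ℝ}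
    (hf : MemLp f 2 μ) (hg : MemLp g 2 μ) : Integrable (fun x => f x * g x) μ := by
  refine Integrable.mono' ((hf.integrable_sq.add hg.integrable_sq).div_const 2)
    (hf.aestronglyMeasurable.mul hg.aestronglyMeasurable) (Filter.Eventually.of_forall fun x => ?_)
  show ‖f x * g x‖ ≤ (f x ^ 2 + g x ^ 2) / 2
  rw [Real.norm_eq_abs, abs_mul]
  nlinarith [sq_nonneg (|f x| - |g x|), sq_abs (f x), sq_abs (g x), abs_nonneg (f x),
    abs_nonneg (g x)]

lemma my_cs {α : Type*} {m : MeasurableSpace α} {μ : Measure α} {f g : α → ℝ}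
    (hf : MemLp f 2 μ) (hg : MemLp g 2 μ) :
    ∫ x, f x * g x ∂μ ≤ Real.sqrt (∫ x, f x ^ 2 ∂μ) * Real.sqrt (∫ x, g x ^ 2 ∂μ) := by
  set Af := ∫ x, f x ^ 2 ∂μ with hAf
  set Ag := ∫ x, g x ^ 2 ∂μ with hAg
  have hAf0 : 0 ≤ Af := integral_nonneg fun x => sq_nonneg _
  have hAg0 : 0 ≤ Ag := integral_nonneg fun x => sq_nonneg _
  have hmul := my_int_mul hf hg
  rcases eq_or_lt_of_le hAf0 with h0 | hpos
  · have hf0 := (integral_eq_zero_iff_of_nonneg (fun x => sq_nonneg (f x)) hf.integrable_sq).mp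
      h0.symm
    have : ∫ x, f x * g x ∂μ = 0 := by
      rw [integral_eq_zero_of_ae]
      filter_upwards [hf0] with x hx
      have hx' : f x ^ 2 = 0 := hx
      have : f x = 0 := by nlinarith
      simp [this]
    rw [this]
    positivity
  rcases eq_or_lt_of_le hAg0 with h0 | hqos
  · have hg0 := (integral_eq_zero_iff_of_nonneg (fun x => sq_nonneg (g x)) hg.integrable_sq).mp
      h0.symm
    have : ∫ x, f x * g x ∂μ = 0 := by
      rw [integral_eq_zero_of_ae]
      filter_upwards [hg0] with x hx
      have hx' : g x ^ 2 = 0 := hx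
      have : g x = 0 := by nlinarith
      simp [this]
    rw [this]
    positivity
  · set F := Real.sqrt Af with hF
    set Gn := Real.sqrt Ag with hGn
    have hFpos : 0 < F := Real.sqrt_pos.mpr hpos
    have hGpos : 0 < Gn := Real.sqrt_pos.mpr hqos
    have hF2 : F ^ 2 = Af := Real.sq_sqrt hAf0
    have hG2 : Gn ^ 2 = Ag := Real.sq_sqrt hAg0
    have hpt : ∀ x, f x * g x ≤ (Gn / F) / 2 * f x ^ 2 + (F / Gn) / 2 * g x ^ 2 := by
      intro x
      have key : (Gn / F) / 2 * f x ^ 2 + (F / Gn) / 2 * g x ^ 2 - f x * g x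
          = (Gn * f x - F * g x) ^ 2 / (2 * F * Gn) := by
        field_simp
        ring
      nlinarith [sq_nonneg (Gn * f x - F * g x), div_nonneg (sq_nonneg (Gn * f x - F * g x))
        (by positivity : (0:ℝ) ≤ 2 * F * Gn)]
    calc ∫ x, f x * g x ∂μ
        ≤ ∫ x, ((Gn / F) / 2 * f x ^ 2 + (F / Gn) / 2 * g x ^ 2) ∂μ := by
          refine integral_mono hmul ?_ hpt
          exact (hf.integrable_sq.const_mul _).add (hg.integrable_sq.const_mul _)
      _ = (Gn / F) / 2 * Af + (F / Gn) / 2 * Ag := by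
          rw [integral_add (hf.integrable_sq.const_mul _) (hg.integrable_sq.const_mul _),
            integral_const_mul, integral_const_mul]
      _ = F * Gn := by
          rw [← hF2, ← hG2]; field_simp; ring

lemma my_final {Cc X K F : ℝ} (hCc : 0 < Cc) (hX0 : 0 ≤ X) (hK0 : 0 ≤ K) (hF0 : 0 ≤ F)
    (h : Cc * X ^ 2 ≤ K * F * X) : X ≤ 1 / Cc * K * F := by
  rcases hX0.eq_or_lt with h0 | h0
  · rw [← h0]
    positivity
  · have h1 : (Cc * X) * X ≤ (K * F) * X := by nlinarith
    have h2 : Cc * X ≤ K * F := le_of_mul_le_mul_right h1 h0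
    calc X = Cc * X / Cc := by field_simp
      _ ≤ K * F / Cc := (div_le_div_iff_of_pos_right hCc).mpr h2
      _ = 1 / Cc * K * F := by ring

/-- Lipschitz dependence of the solution of the nonlocal elliptic equation on the datum:
under coercivity with constant `Cc > 0`, if `v₁, v₂ ∈ L²(B)` solve the equation with data
`u₁, u₂ ∈ L²(A)` respectively, then
`‖v₁ - v₂‖_{L²(B)} ≤ (1/Cc) (∬_{B×A} J²)^{1/2} ‖u₁ - u₂‖_{L²(A)}`. -/
theorem stmt_4 {N : ℕ} (A B : Set (EuclideanSpace ℝ (Fin N)))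
    (hAm : MeasurableSet A) (hBm : MeasurableSet B)
    (hAb : Bornology.IsBounded A) (hBb : Bornology.IsBounded B)
    (J G : EuclideanSpace ℝ (Fin N) → ℝ)
    (hJc : Continuous J) (hGc : Continuous G)
    (hJ0 : ∀ z, 0 ≤ J z) (hG0 : ∀ z, 0 ≤ G z)
    (hJbd : ∃ C, ∀ z, J z ≤ C) (hGbd : ∃ C, ∀ z, G z ≤ C)
    (hJs : ∀ z, J (-z) = J z) (hGs : ∀ z, G (-z) = G z)
    (Cc : ℝ) (hCc : 0 < Cc)
    (hcoer : ∀ w : EuclideanSpace ℝ (Fin N) → ℝ, MemLp w 2 (volume.restrict B) →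
      Cc * ∫ x in B, (w x) ^ 2 ≤
        (1 / 2) * (∫ x in B, ∫ y in B, G (x - y) * (w x - w y) ^ 2)
          + ∫ x in B, (∫ y in A, J (x - y)) * (w x) ^ 2)
    (u₁ u₂ v₁ v₂ : EuclideanSpace ℝ (Fin N) → ℝ)
    (hu₁ : MemLp u₁ 2 (volume.restrict A)) (hu₂ : MemLp u₂ 2 (volume.restrict A))
    (hv₁ : MemLp v₁ 2 (volume.restrict B)) (hv₂ : MemLp v₂ 2 (volume.restrict B))
    (he₁ : ∀ᵐ x ∂(volume.restrict B),
      0 = (∫ y in B, G (x - y) * (v₁ y - v₁ x)) + ∫ y in A, J (x - y) * (u₁ y - v₁ x))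
    (he₂ : ∀ᵐ x ∂(volume.restrict B),
      0 = (∫ y in B, G (x - y) * (v₂ y - v₂ x)) + ∫ y in A, J (x - y) * (u₂ y - v₂ x)) :
    Real.sqrt (∫ x in B, (v₁ x - v₂ x) ^ 2) ≤
      (1 / Cc) * Real.sqrt (∫ x in B, ∫ y in A, (J (x - y)) ^ 2)
        * Real.sqrt (∫ x in A, (u₁ x - u₂ x) ^ 2) := by
  set μ := volume.restrict B with hμdef
  set ν := volume.restrict A with hνdef
  haveI hμfin : IsFiniteMeasure μ :=
    ⟨by rw [hμdef, Measure.restrict_apply_univ]; exact hBb.measure_lt_top⟩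
  haveI hνfin : IsFiniteMeasure ν :=
    ⟨by rw [hνdef, Measure.restrict_apply_univ]; exact hAb.measure_lt_top⟩
  obtain ⟨CG, hCG⟩ := hGbd
  obtain ⟨CJ, hCJ⟩ := hJbd
  set w : EuclideanSpace ℝ (Fin N) → ℝ := fun x => v₁ x - v₂ x with hwdef
  set f : EuclideanSpace ℝ (Fin N) → ℝ := fun x => u₁ x - u₂ x with hfdef
  have hw : MemLp w 2 μ := hv₁.sub hv₂
  have hf : MemLp f 2 ν := hu₁.sub hu₂
  have hwInt : Integrable w μ := hw.integrable one_le_two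
  have hfInt : Integrable f ν := hf.integrable one_le_two
  have hv₁Int : Integrable v₁ μ := hv₁.integrable one_le_two
  have hv₂Int : Integrable v₂ μ := hv₂.integrable one_le_two
  have hu₁Int : Integrable u₁ ν := hu₁.integrable one_le_two
  have hu₂Int : Integrable u₂ ν := hu₂.integrable one_le_two
  have hwsq : Integrable (fun x => w x ^ 2) μ := hw.integrable_sq
  have hGnorm : ∀ z : EuclideanSpace ℝ (Fin N), ‖G z‖ ≤ CG := fun z => by
    rw [Real.norm_eq_abs, abs_of_nonneg (hG0 z)]; exact hCG z
  have hJnorm : ∀ z : EuclideanSpace ℝ (Fin N), ‖J z‖ ≤ CJ := fun z => by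
    rw [Real.norm_eq_abs, abs_of_nonneg (hJ0 z)]; exact hCJ z
  have hGyInt : ∀ (x : EuclideanSpace ℝ (Fin N)) (φ : EuclideanSpace ℝ (Fin N) → ℝ),
      Integrable φ μ → Integrable (fun y => G (x - y) * φ y) μ := fun x φ hφ =>
    hφ.bdd_mul ((hGc.comp (continuous_const.sub continuous_id)).aestronglyMeasurable)
      (Filter.Eventually.of_forall fun y => hGnorm _)
  have hJyInt : ∀ (x : EuclideanSpace ℝ (Fin N)) (φ : EuclideanSpace ℝ (Fin N) → ℝ),
      Integrable φ ν → Integrable (fun y => J (x - y) * φ y) ν := fun x φ hφ =>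
    hφ.bdd_mul ((hJc.comp (continuous_const.sub continuous_id)).aestronglyMeasurable)
      (Filter.Eventually.of_forall fun y => hJnorm _)
  have hGxInt : ∀ x : EuclideanSpace ℝ (Fin N), Integrable (fun y => G (x - y)) μ := fun x =>
    (memLp_top_of_bound ((hGc.comp (continuous_const.sub continuous_id)).aestronglyMeasurable)
      CG (Filter.Eventually.of_forall fun y => hGnorm _)).integrable le_top
  have hJxInt : ∀ x : EuclideanSpace ℝ (Fin N), Integrable (fun y => J (x - y)) ν := fun x =>
    (memLp_top_of_bound ((hJc.comp (continuous_const.sub continuous_id)).aestronglyMeasurable)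
      CJ (Filter.Eventually.of_forall fun y => hJnorm _)).integrable le_top
  -- the a.e. equation for w
  have hew : ∀ᵐ x ∂μ, (∫ y, G (x - y) * w y ∂μ) - (∫ y, G (x - y) ∂μ) * w x
      + ((∫ y, J (x - y) * f y ∂ν) - (∫ y, J (x - y) ∂ν) * w x) = 0 := by
    have dG : ∀ (v : EuclideanSpace ℝ (Fin N) → ℝ), Integrable v μ →
        ∀ x : EuclideanSpace ℝ (Fin N), ∫ y, G (x - y) * (v y - v x) ∂μ
          = (∫ y, G (x - y) * v y ∂μ) - (∫ y, G (x - y) ∂μ) * v x := by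
      intro v hv x
      simp_rw [mul_sub]
      rw [integral_sub (hGyInt x v hv) ((hGxInt x).mul_const (v x)), integral_mul_const]
    have dJ : ∀ (u : EuclideanSpace ℝ (Fin N) → ℝ), Integrable u ν →
        ∀ (x : EuclideanSpace ℝ (Fin N)) (c : ℝ), ∫ y, J (x - y) * (u y - c) ∂ν
          = (∫ y, J (x - y) * u y ∂ν) - (∫ y, J (x - y) ∂ν) * c := by
      intro u hu x c
      simp_rw [mul_sub]
      rw [integral_sub (hJyInt x u hu) ((hJxInt x).mul_const c), integral_mul_const]
    filter_upwards [he₁, he₂] with x h1 h2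
    rw [dG v₁ hv₁Int x, dJ u₁ hu₁Int x (v₁ x)] at h1
    rw [dG v₂ hv₂Int x, dJ u₂ hu₂Int x (v₂ x)] at h2
    have ew : ∫ y, G (x - y) * w y ∂μ
        = (∫ y, G (x - y) * v₁ y ∂μ) - ∫ y, G (x - y) * v₂ y ∂μ := by
      simp_rw [hwdef, mul_sub]
      exact integral_sub (hGyInt x v₁ hv₁Int) (hGyInt x v₂ hv₂Int)
    have ef : ∫ y, J (x - y) * f y ∂ν
        = (∫ y, J (x - y) * u₁ y ∂ν) - ∫ y, J (x - y) * u₂ y ∂ν := by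
      simp_rw [hfdef, mul_sub]
      exact integral_sub (hJyInt x u₁ hu₁Int) (hJyInt x u₂ hu₂Int)
    rw [ew, ef, hwdef]
    simp only []
    linarith
  -- measurability and bounds of the four slice integrals
  have hgGaesm : AEStronglyMeasurable (fun x => ∫ y, G (x - y) * w y ∂μ) μ :=
    ((((hGc.comp (continuous_fst.sub continuous_snd)).stronglyMeasurable.aestronglyMeasurable).mul
      hw.aestronglyMeasurable.comp_snd : AEStronglyMeasurable
        (fun p : EuclideanSpace ℝ (Fin N) × EuclideanSpace ℝ (Fin N) => G (p.1 - p.2) * w p.2)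
        (μ.prod μ))).integral_prod_right'
  have hhhaesm : AEStronglyMeasurable (fun x => ∫ y, J (x - y) * f y ∂ν) μ :=
    ((((hJc.comp (continuous_fst.sub continuous_snd)).stronglyMeasurable.aestronglyMeasurable).mul
      hf.aestronglyMeasurable.comp_snd : AEStronglyMeasurable
        (fun p : EuclideanSpace ℝ (Fin N) × EuclideanSpace ℝ (Fin N) => J (p.1 - p.2) * f p.2)
        (μ.prod ν))).integral_prod_right'
  have hbBaesm : AEStronglyMeasurable (fun x => ∫ y, G (x - y) ∂μ) μ :=
    ((hGc.comp (continuous_fst.sub continuous_snd)).stronglyMeasurable.integral_prod_right').aestronglyMeasurable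
  have haAaesm : AEStronglyMeasurable (fun x => ∫ y, J (x - y) ∂ν) μ :=
    ((hJc.comp (continuous_fst.sub continuous_snd)).stronglyMeasurable.integral_prod_right').aestronglyMeasurable
  have hgGbd : ∀ x, ‖∫ y, G (x - y) * w y ∂μ‖ ≤ CG * ∫ y, ‖w y‖ ∂μ := fun x => by
    calc ‖∫ y, G (x - y) * w y ∂μ‖ ≤ ∫ y, ‖G (x - y) * w y‖ ∂μ := norm_integral_le_integral_norm _
      _ ≤ ∫ y, CG * ‖w y‖ ∂μ := by
          refine integral_mono (hGyInt x w hwInt).norm (hwInt.norm.const_mul CG) fun y => ?_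
          rw [norm_mul]
          exact mul_le_mul_of_nonneg_right (hGnorm _) (norm_nonneg _)
      _ = CG * ∫ y, ‖w y‖ ∂μ := integral_const_mul _ _
  have hhhbd : ∀ x, ‖∫ y, J (x - y) * f y ∂ν‖ ≤ CJ * ∫ y, ‖f y‖ ∂ν := fun x => by
    calc ‖∫ y, J (x - y) * f y ∂ν‖ ≤ ∫ y, ‖J (x - y) * f y‖ ∂ν := norm_integral_le_integral_norm _
      _ ≤ ∫ y, CJ * ‖f y‖ ∂ν := by
          refine integral_mono (hJyInt x f hfInt).norm (hfInt.norm.const_mul CJ) fun y => ?_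
          rw [norm_mul]
          exact mul_le_mul_of_nonneg_right (hJnorm _) (norm_nonneg _)
      _ = CJ * ∫ y, ‖f y‖ ∂ν := integral_const_mul _ _
  have hbBbd : ∀ x, ‖∫ y, G (x - y) ∂μ‖ ≤ CG * (μ Set.univ).toReal := fun x => by
    calc ‖∫ y, G (x - y) ∂μ‖ ≤ ∫ y, ‖G (x - y)‖ ∂μ := norm_integral_le_integral_norm _
      _ ≤ ∫ _, CG ∂μ := integral_mono (hGxInt x).norm (integrable_const _) fun y => hGnorm _
      _ = CG * (μ Set.univ).toReal := by rw [integral_const, smul_eq_mul, mul_comm, measureReal_def]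
  have haAbd : ∀ x, ‖∫ y, J (x - y) ∂ν‖ ≤ CJ * (ν Set.univ).toReal := fun x => by
    calc ‖∫ y, J (x - y) ∂ν‖ ≤ ∫ y, ‖J (x - y)‖ ∂ν := norm_integral_le_integral_norm _
      _ ≤ ∫ _, CJ ∂ν := integral_mono (hJxInt x).norm (integrable_const _) fun y => hJnorm _
      _ = CJ * (ν Set.univ).toReal := by rw [integral_const, smul_eq_mul, mul_comm, measureReal_def]
  have I1 : Integrable (fun x => (∫ y, G (x - y) * w y ∂μ) * w x) μ :=
    hwInt.bdd_mul hgGaesm (Filter.Eventually.of_forall hgGbd)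
  have I2 : Integrable (fun x => (∫ y, G (x - y) ∂μ) * w x ^ 2) μ :=
    hwsq.bdd_mul hbBaesm (Filter.Eventually.of_forall hbBbd)
  have I3 : Integrable (fun x => (∫ y, J (x - y) * f y ∂ν) * w x) μ :=
    hwInt.bdd_mul hhhaesm (Filter.Eventually.of_forall hhhbd)
  have I4 : Integrable (fun x => (∫ y, J (x - y) ∂ν) * w x ^ 2) μ :=
    hwsq.bdd_mul haAaesm (Filter.Eventually.of_forall haAbd)
  -- master identity
  have master : (∫ x, (∫ y, G (x - y) ∂μ) * w x ^ 2 ∂μ)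
      - (∫ x, (∫ y, G (x - y) * w y ∂μ) * w x ∂μ)
      + (∫ x, (∫ y, J (x - y) ∂ν) * w x ^ 2 ∂μ)
      = ∫ x, (∫ y, J (x - y) * f y ∂ν) * w x ∂μ := by
    have hzero : ∀ᵐ x ∂μ, (∫ y, G (x - y) ∂μ) * w x ^ 2
        - (∫ y, G (x - y) * w y ∂μ) * w x
        + ((∫ y, J (x - y) ∂ν) * w x ^ 2 - (∫ y, J (x - y) * f y ∂ν) * w x) = 0 := by
      filter_upwards [hew] with x hx
      linear_combination (-(w x)) * hx
    have h0 : ∫ x, ((∫ y, G (x - y) ∂μ) * w x ^ 2 - (∫ y, G (x - y) * w y ∂μ) * w x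
        + ((∫ y, J (x - y) ∂ν) * w x ^ 2 - (∫ y, J (x - y) * f y ∂ν) * w x)) ∂μ = 0 :=
      integral_eq_zero_of_ae hzero
    have I21 : Integrable (fun x => (∫ y, G (x - y) ∂μ) * w x ^ 2
        - (∫ y, G (x - y) * w y ∂μ) * w x) μ := I2.sub I1
    have I43 : Integrable (fun x => (∫ y, J (x - y) ∂ν) * w x ^ 2
        - (∫ y, J (x - y) * f y ∂ν) * w x) μ := I4.sub I3
    rw [integral_add I21 I43, integral_sub I2 I1, integral_sub I4 I3] at h0
    linarith
  -- product integrability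
  have hGmp : AEStronglyMeasurable
      (fun p : EuclideanSpace ℝ (Fin N) × EuclideanSpace ℝ (Fin N) => G (p.1 - p.2))
      (μ.prod μ) := (hGc.comp (continuous_fst.sub continuous_snd)).aestronglyMeasurable
  have P1 : Integrable (fun p : EuclideanSpace ℝ (Fin N) × EuclideanSpace ℝ (Fin N) =>
      G (p.1 - p.2) * (w p.1 * w p.2)) (μ.prod μ) :=
    (hwInt.mul_prod hwInt).bdd_mul hGmp (Filter.Eventually.of_forall fun p => hGnorm _)
  have P2 : Integrable (fun p : EuclideanSpace ℝ (Fin N) × EuclideanSpace ℝ (Fin N) =>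
      G (p.1 - p.2) * w p.1 ^ 2) (μ.prod μ) := by
    have := (hwsq.mul_prod (integrable_const (1 : ℝ))).bdd_mul hGmp (Filter.Eventually.of_forall fun p => hGnorm _)
    simpa using this
  have P3 : Integrable (fun p : EuclideanSpace ℝ (Fin N) × EuclideanSpace ℝ (Fin N) =>
      G (p.1 - p.2) * w p.2 ^ 2) (μ.prod μ) := by
    have := ((integrable_const (1 : ℝ)).mul_prod hwsq).bdd_mul hGmp (Filter.Eventually.of_forall fun p => hGnorm _)
    simpa using this
  have P4 : Integrable (fun p : EuclideanSpace ℝ (Fin N) × EuclideanSpace ℝ (Fin N) =>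
      G (p.1 - p.2) * (w p.1 - w p.2) ^ 2) (μ.prod μ) := by
    have heq : (fun p : EuclideanSpace ℝ (Fin N) × EuclideanSpace ℝ (Fin N) =>
        G (p.1 - p.2) * (w p.1 - w p.2) ^ 2)
        = fun p => (G (p.1 - p.2) * w p.1 ^ 2 - 2 * (G (p.1 - p.2) * (w p.1 * w p.2)))
            + G (p.1 - p.2) * w p.2 ^ 2 := funext fun p => by ring
    rw [heq]
    exact (P2.sub (P1.const_mul 2)).add P3
  -- iterated-integral swap
  have hGsymm : ∀ a b : EuclideanSpace ℝ (Fin N), G (a - b) = G (b - a) := fun a b => by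
    rw [← neg_sub b a, hGs]
  have hiter3 : ∫ x, ∫ y, G (x - y) * w y ^ 2 ∂μ ∂μ = ∫ x, ∫ y, G (x - y) * w x ^ 2 ∂μ ∂μ := by
    have hswap : ∫ x, ∫ y, G (x - y) * w y ^ 2 ∂μ ∂μ
        = ∫ y, ∫ x, G (x - y) * w y ^ 2 ∂μ ∂μ :=
      integral_integral_swap (f := fun x y => G (x - y) * w y ^ 2) (by exact P3)
    rw [hswap]
    refine integral_congr_ae (Filter.Eventually.of_forall fun x => ?_)
    refine integral_congr_ae (Filter.Eventually.of_forall fun y => ?_)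
    show G (y - x) * w x ^ 2 = G (x - y) * w x ^ 2
    rw [hGsymm y x]
  -- the symmetrization identity
  have keyG : (1 / 2) * (∫ x, ∫ y, G (x - y) * (w x - w y) ^ 2 ∂μ ∂μ)
      = (∫ x, (∫ y, G (x - y) ∂μ) * w x ^ 2 ∂μ)
        - ∫ x, (∫ y, G (x - y) * w y ∂μ) * w x ∂μ := by
    have q1 : ∫ x, ∫ y, G (x - y) * (w x * w y) ∂μ ∂μ
        = ∫ p : EuclideanSpace ℝ (Fin N) × EuclideanSpace ℝ (Fin N),
            G (p.1 - p.2) * (w p.1 * w p.2) ∂(μ.prod μ) := by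
      exact integral_integral (by exact P1)
    have q2 : ∫ x, ∫ y, G (x - y) * w x ^ 2 ∂μ ∂μ
        = ∫ p : EuclideanSpace ℝ (Fin N) × EuclideanSpace ℝ (Fin N),
            G (p.1 - p.2) * w p.1 ^ 2 ∂(μ.prod μ) := by
      exact integral_integral (by exact P2)
    have q3 : ∫ x, ∫ y, G (x - y) * w y ^ 2 ∂μ ∂μ
        = ∫ p : EuclideanSpace ℝ (Fin N) × EuclideanSpace ℝ (Fin N),
            G (p.1 - p.2) * w p.2 ^ 2 ∂(μ.prod μ) := by
      exact integral_integral (by exact P3)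
    have e1 : ∫ x, ∫ y, G (x - y) * (w x - w y) ^ 2 ∂μ ∂μ
        = ∫ p : EuclideanSpace ℝ (Fin N) × EuclideanSpace ℝ (Fin N),
            G (p.1 - p.2) * (w p.1 - w p.2) ^ 2 ∂(μ.prod μ) := by
      exact integral_integral (by exact P4)
    have e2 : ∫ p : EuclideanSpace ℝ (Fin N) × EuclideanSpace ℝ (Fin N),
          G (p.1 - p.2) * (w p.1 - w p.2) ^ 2 ∂(μ.prod μ)
        = (∫ p : EuclideanSpace ℝ (Fin N) × EuclideanSpace ℝ (Fin N),
              G (p.1 - p.2) * w p.1 ^ 2 ∂(μ.prod μ))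
          - 2 * (∫ p : EuclideanSpace ℝ (Fin N) × EuclideanSpace ℝ (Fin N),
              G (p.1 - p.2) * (w p.1 * w p.2) ∂(μ.prod μ))
          + ∫ p : EuclideanSpace ℝ (Fin N) × EuclideanSpace ℝ (Fin N),
              G (p.1 - p.2) * w p.2 ^ 2 ∂(μ.prod μ) := by
      rw [show (fun p : EuclideanSpace ℝ (Fin N) × EuclideanSpace ℝ (Fin N) =>
          G (p.1 - p.2) * (w p.1 - w p.2) ^ 2)
          = fun p => (G (p.1 - p.2) * w p.1 ^ 2 - 2 * (G (p.1 - p.2) * (w p.1 * w p.2)))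
              + G (p.1 - p.2) * w p.2 ^ 2 from funext fun p => by ring]
      have P21 : Integrable (fun p : EuclideanSpace ℝ (Fin N) × EuclideanSpace ℝ (Fin N) =>
          G (p.1 - p.2) * w p.1 ^ 2 - 2 * (G (p.1 - p.2) * (w p.1 * w p.2))) (μ.prod μ) :=
        P2.sub (P1.const_mul 2)
      have P1m : Integrable (fun p : EuclideanSpace ℝ (Fin N) × EuclideanSpace ℝ (Fin N) =>
          2 * (G (p.1 - p.2) * (w p.1 * w p.2))) (μ.prod μ) := P1.const_mul 2
      rw [integral_add P21 P3, integral_sub P2 P1m, integral_const_mul]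
    have e3 : ∫ p : EuclideanSpace ℝ (Fin N) × EuclideanSpace ℝ (Fin N),
          G (p.1 - p.2) * w p.2 ^ 2 ∂(μ.prod μ)
        = ∫ p : EuclideanSpace ℝ (Fin N) × EuclideanSpace ℝ (Fin N),
            G (p.1 - p.2) * w p.1 ^ 2 ∂(μ.prod μ) := q3.symm.trans (hiter3.trans q2)
    have e4 : ∫ p : EuclideanSpace ℝ (Fin N) × EuclideanSpace ℝ (Fin N),
          G (p.1 - p.2) * w p.1 ^ 2 ∂(μ.prod μ)
        = ∫ x, (∫ y, G (x - y) ∂μ) * w x ^ 2 ∂μ := by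
      rw [← q2]
      simp_rw [integral_mul_const]
    have e5 : ∫ p : EuclideanSpace ℝ (Fin N) × EuclideanSpace ℝ (Fin N),
          G (p.1 - p.2) * (w p.1 * w p.2) ∂(μ.prod μ)
        = ∫ x, (∫ y, G (x - y) * w y ∂μ) * w x ∂μ := by
      rw [← q1]
      have : ∀ (x y : EuclideanSpace ℝ (Fin N)),
          G (x - y) * (w x * w y) = G (x - y) * w y * w x := fun x y => by ring
      simp_rw [this, integral_mul_const]
    rw [e1, e2, e3, e4, e5]
    ring
  -- coercivity
  have hco := hcoer w hw
  have hmain : Cc * (∫ x, w x ^ 2 ∂μ) ≤ ∫ x, (∫ y, J (x - y) * f y ∂ν) * w x ∂μ := by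
    rw [← master, ← keyG]; exact hco
  -- Cauchy–Schwarz bounds
  have hhMem : MemLp (fun x => ∫ y, J (x - y) * f y ∂ν) 2 μ :=
    (memLp_top_of_bound hhhaesm _ (Filter.Eventually.of_forall hhhbd)).mono_exponent le_top
  have cs1 : ∫ x, (∫ y, J (x - y) * f y ∂ν) * w x ∂μ
      ≤ Real.sqrt (∫ x, (∫ y, J (x - y) * f y ∂ν) ^ 2 ∂μ) * Real.sqrt (∫ x, w x ^ 2 ∂μ) :=
    my_cs hhMem hw
  -- pointwise Cauchy–Schwarz in y
  have hJxMem : ∀ x : EuclideanSpace ℝ (Fin N), MemLp (fun y => J (x - y)) 2 ν := fun x =>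
    (memLp_top_of_bound ((hJc.comp (continuous_const.sub continuous_id)).aestronglyMeasurable)
      CJ (Filter.Eventually.of_forall fun y => hJnorm _)).mono_exponent le_top
  have hJ2aesm : AEStronglyMeasurable (fun x => ∫ y, (J (x - y)) ^ 2 ∂ν) μ :=
    (((hJc.comp (continuous_fst.sub continuous_snd)).pow
      2).stronglyMeasurable.integral_prod_right').aestronglyMeasurable
  have hJ2xInt : ∀ x : EuclideanSpace ℝ (Fin N), Integrable (fun y => (J (x - y)) ^ 2) ν :=
    fun x => (hJxMem x).integrable_sq
  have hJ2bd : ∀ x, ‖∫ y, (J (x - y)) ^ 2 ∂ν‖ ≤ CJ ^ 2 * (ν Set.univ).toReal := fun x => by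
    calc ‖∫ y, (J (x - y)) ^ 2 ∂ν‖ ≤ ∫ y, ‖(J (x - y)) ^ 2‖ ∂ν :=
          norm_integral_le_integral_norm _
      _ ≤ ∫ _, CJ ^ 2 ∂ν := by
          refine integral_mono (hJ2xInt x).norm (integrable_const _) fun y => ?_
          rw [Real.norm_eq_abs, abs_of_nonneg (sq_nonneg _)]
          nlinarith [hJ0 (x - y), hCJ (x - y)]
      _ = CJ ^ 2 * (ν Set.univ).toReal := by rw [integral_const, smul_eq_mul, mul_comm, measureReal_def]
  have hF0 : 0 ≤ ∫ y, f y ^ 2 ∂ν := integral_nonneg fun y => sq_nonneg _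
  have hK0 : 0 ≤ ∫ x, ∫ y, (J (x - y)) ^ 2 ∂ν ∂μ :=
    integral_nonneg fun x => integral_nonneg fun y => sq_nonneg _
  have cs2 : ∫ x, (∫ y, J (x - y) * f y ∂ν) ^ 2 ∂μ
      ≤ (∫ x, ∫ y, (J (x - y)) ^ 2 ∂ν ∂μ) * ∫ y, f y ^ 2 ∂ν := by
    have hbndInt : Integrable (fun x => (∫ y, (J (x - y)) ^ 2 ∂ν) * (∫ y, f y ^ 2 ∂ν)) μ :=
      ((memLp_top_of_bound hJ2aesm _
        (Filter.Eventually.of_forall hJ2bd)).integrable le_top).mul_const _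
    have hpt : ∀ x, (∫ y, J (x - y) * f y ∂ν) ^ 2
        ≤ (∫ y, (J (x - y)) ^ 2 ∂ν) * ∫ y, f y ^ 2 ∂ν := fun x => by
      have ha0 : 0 ≤ ∫ y, (J (x - y)) ^ 2 ∂ν := integral_nonneg fun y => sq_nonneg _
      have h1 := my_cs (hJxMem x) hf
      have h2 := my_cs (hJxMem x) hf.neg
      simp only [Pi.neg_apply, mul_neg, integral_neg, neg_sq] at h2
      have habs : |∫ y, J (x - y) * f y ∂ν|
          ≤ Real.sqrt (∫ y, (J (x - y)) ^ 2 ∂ν) * Real.sqrt (∫ y, f y ^ 2 ∂ν) :=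
        abs_le.mpr ⟨by linarith, h1⟩
      calc (∫ y, J (x - y) * f y ∂ν) ^ 2
          ≤ (Real.sqrt (∫ y, (J (x - y)) ^ 2 ∂ν) * Real.sqrt (∫ y, f y ^ 2 ∂ν)) ^ 2 := by
            rw [← sq_abs]
            exact pow_le_pow_left₀ (abs_nonneg _) habs 2
        _ = (∫ y, (J (x - y)) ^ 2 ∂ν) * ∫ y, f y ^ 2 ∂ν := by
            rw [mul_pow, Real.sq_sqrt ha0, Real.sq_sqrt hF0]
    calc ∫ x, (∫ y, J (x - y) * f y ∂ν) ^ 2 ∂μ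
        ≤ ∫ x, (∫ y, (J (x - y)) ^ 2 ∂ν) * (∫ y, f y ^ 2 ∂ν) ∂μ :=
          integral_mono_of_nonneg (Filter.Eventually.of_forall fun x => sq_nonneg _)
            hbndInt (Filter.Eventually.of_forall hpt)
      _ = (∫ x, ∫ y, (J (x - y)) ^ 2 ∂ν ∂μ) * ∫ y, f y ^ 2 ∂ν := integral_mul_const _ _
  -- final algebra
  have hSw0 : 0 ≤ ∫ x, w x ^ 2 ∂μ := integral_nonneg fun x => sq_nonneg _
  have step : Real.sqrt (∫ x, (∫ y, J (x - y) * f y ∂ν) ^ 2 ∂μ)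
      ≤ Real.sqrt (∫ x, ∫ y, (J (x - y)) ^ 2 ∂ν ∂μ) * Real.sqrt (∫ y, f y ^ 2 ∂ν) := by
    rw [← Real.sqrt_mul hK0]
    exact Real.sqrt_le_sqrt cs2
  have chain : Cc * (∫ x, w x ^ 2 ∂μ)
      ≤ (Real.sqrt (∫ x, ∫ y, (J (x - y)) ^ 2 ∂ν ∂μ) * Real.sqrt (∫ y, f y ^ 2 ∂ν))
        * Real.sqrt (∫ x, w x ^ 2 ∂μ) :=
    hmain.trans (cs1.trans (mul_le_mul_of_nonneg_right step (Real.sqrt_nonneg _)))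
  refine my_final hCc (Real.sqrt_nonneg _) (Real.sqrt_nonneg _) (Real.sqrt_nonneg _) ?_
  rw [Real.sq_sqrt hSw0]
  exact chain
end

section
/- Let $u : A \times [0,\infty) \to \mathbb{R}$ be a (sufficiently smooth) solution of $u_t = \Delta u + \int_B J(x-y)(v(y,t)-u(x,t))\,dy$ in $A$ with Neumann boundary condition $\partial u/\partial\eta = 0$ on $\partial A$, where for each $t$, $v(\cdot,t)$ solves the nonlocal elliptic equation $0 = \int_B G(x-y)(v(y,t)-v(x,t))\,dy + \int_A J(x-y)(u(y,t)-v(x,t))\,dy$ with symmetric kernels. Then the total mass in $A$ is conserved: $\int_A u(x,t)\,dx = \int_A u_0(x)\,dx$ for all $t > 0$. -/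
open MeasureTheory

private lemma restrict_finite {N : ℕ} {S : Set (EuclideanSpace ℝ (Fin N))}
    (hSb : Bornology.IsBounded S) :
    IsFiniteMeasure (volume.restrict S) :=
  ⟨by rw [Measure.restrict_apply_univ]; exact hSb.measure_lt_top⟩

private lemma kern_int {N : ℕ} {S T : Set (EuclideanSpace ℝ (Fin N))}
    (hSb : Bornology.IsBounded S) (hTb : Bornology.IsBounded T)
    {K : EuclideanSpace ℝ (Fin N) → ℝ} (hKm : Measurable K)
    {C : ℝ} (hK0 : ∀ z, 0 ≤ K z) (hKbd : ∀ z, K z ≤ C)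
    {f g : EuclideanSpace ℝ (Fin N) → ℝ}
    (hf : IntegrableOn f S) (hg : IntegrableOn g T) :
    Integrable (fun p : EuclideanSpace ℝ (Fin N) × EuclideanSpace ℝ (Fin N) =>
      K (p.1 - p.2) * (g p.2 - f p.1)) ((volume.restrict S).prod (volume.restrict T)) := by
  haveI := restrict_finite hSb
  haveI := restrict_finite hTb
  have hmeas : AEStronglyMeasurable
      (fun p : EuclideanSpace ℝ (Fin N) × EuclideanSpace ℝ (Fin N) =>
        K (p.1 - p.2) * (g p.2 - f p.1)) ((volume.restrict S).prod (volume.restrict T)) := by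
    exact ((hKm.comp (measurable_fst.sub measurable_snd)).aestronglyMeasurable).mul
      ((hg.aestronglyMeasurable.comp_snd).sub (hf.aestronglyMeasurable.comp_fst))
  have hbd : Integrable (fun p : EuclideanSpace ℝ (Fin N) × EuclideanSpace ℝ (Fin N) =>
      C * ‖g p.2‖ + C * ‖f p.1‖) ((volume.restrict S).prod (volume.restrict T)) := by
    have h1 : Integrable (fun p : EuclideanSpace ℝ (Fin N) × EuclideanSpace ℝ (Fin N) =>
        (fun _ => C : EuclideanSpace ℝ (Fin N) → ℝ) p.1 * ‖g p.2‖)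
        ((volume.restrict S).prod (volume.restrict T)) :=
      (integrable_const C).mul_prod hg.norm
    have h2 : Integrable (fun p : EuclideanSpace ℝ (Fin N) × EuclideanSpace ℝ (Fin N) =>
        (C * ‖f p.1‖) * (fun _ => (1:ℝ) : EuclideanSpace ℝ (Fin N) → ℝ) p.2)
        ((volume.restrict S).prod (volume.restrict T)) :=
      ((hf.norm.const_mul C).mul_prod (integrable_const 1))
    exact h1.add (by simpa using h2)
  refine hbd.mono' hmeas (Filter.Eventually.of_forall fun p => ?_)
  have hC : 0 ≤ C := le_trans (hK0 0) (hKbd 0)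
  calc ‖K (p.1 - p.2) * (g p.2 - f p.1)‖
      = K (p.1 - p.2) * ‖g p.2 - f p.1‖ := by
        rw [norm_mul, Real.norm_of_nonneg (hK0 _)]
    _ ≤ C * (‖g p.2‖ + ‖f p.1‖) :=
        mul_le_mul (hKbd _) (norm_sub_le _ _) (norm_nonneg _) hC
    _ = C * ‖g p.2‖ + C * ‖f p.1‖ := by ring

/-- Conservation of the total mass in `A` for the coupled parabolic–elliptic system:
if `u` solves `u_t = Δu + ∫_B J(x-y)(v(y,t)-u(x,t)) dy` in `A` with homogeneous Neumann
boundary condition (encoded here, via the divergence theorem, as `∫_A Δu(x,t) dx = 0`,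
with `L = Δu`), and `v(·,t)` solves the nonlocal elliptic equation in `B`, then
`∫_A u(x,t) dx = ∫_A u₀(x) dx` for all `t > 0`. -/
theorem stmt_8 {N : ℕ} (A B : Set (EuclideanSpace ℝ (Fin N)))
    (hAm : MeasurableSet A) (hBm : MeasurableSet B)
    (hAb : Bornology.IsBounded A) (hBb : Bornology.IsBounded B)
    (J G : EuclideanSpace ℝ (Fin N) → ℝ)
    (hJm : Measurable J) (hGm : Measurable G)
    (hJ0 : ∀ z, 0 ≤ J z) (hG0 : ∀ z, 0 ≤ G z)
    (hJbd : ∃ C, ∀ z, J z ≤ C) (hGbd : ∃ C, ∀ z, G z ≤ C)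
    (hJs : ∀ z, J (-z) = J z) (hGs : ∀ z, G (-z) = G z)
    (u v L : EuclideanSpace ℝ (Fin N) → ℝ → ℝ)
    (hu : ∀ t, IntegrableOn (fun x => u x t) A)
    (hv : ∀ t, IntegrableOn (fun x => v x t) B)
    (hPDE : ∀ x ∈ A, ∀ t > (0 : ℝ),
      HasDerivAt (u x) (L x t + ∫ y in B, J (x - y) * (v y t - u x t)) t)
    (hEll : ∀ t > (0 : ℝ), ∀ x ∈ B,
      0 = (∫ y in B, G (x - y) * (v y t - v x t)) + ∫ y in A, J (x - y) * (u y t - v x t))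
    (hNeumann : ∀ t > (0 : ℝ), (∫ x in A, L x t) = 0)
    (hDint : ∀ t > (0 : ℝ),
      HasDerivAt (fun s => ∫ x in A, u x s)
        (∫ x in A, (L x t + ∫ y in B, J (x - y) * (v y t - u x t))) t)
    (hcont : ContinuousOn (fun t => ∫ x in A, u x t) (Set.Ici (0 : ℝ))) :
    ∀ t > (0 : ℝ), (∫ x in A, u x t) = ∫ x in A, u x 0 := by
  obtain ⟨CJ, hCJ⟩ := hJbd
  obtain ⟨CG, hCG⟩ := hGbd
  haveI := restrict_finite hAb
  haveI := restrict_finite hBb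
  set μA := volume.restrict A with hμA
  set μB := volume.restrict B with hμB
  -- The derivative of the total mass vanishes for every t > 0.
  have hderiv0 : ∀ t > (0 : ℝ), HasDerivAt (fun s => ∫ x in A, u x s) 0 t := by
    intro t ht
    -- integrability of the three kernel integrands
    have hfint : Integrable (fun p : EuclideanSpace ℝ (Fin N) × EuclideanSpace ℝ (Fin N) =>
        J (p.1 - p.2) * (v p.2 t - u p.1 t)) (μA.prod μB) :=
      kern_int hAb hBb hJm hJ0 hCJ (hu t) (hv t)
    have hgint : Integrable (fun p : EuclideanSpace ℝ (Fin N) × EuclideanSpace ℝ (Fin N) =>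
        J (p.1 - p.2) * (u p.2 t - v p.1 t)) (μB.prod μA) :=
      kern_int hBb hAb hJm hJ0 hCJ (hv t) (hu t)
    have hhint : Integrable (fun p : EuclideanSpace ℝ (Fin N) × EuclideanSpace ℝ (Fin N) =>
        G (p.1 - p.2) * (v p.2 t - v p.1 t)) (μB.prod μB) :=
      kern_int hBb hBb hGm hG0 hCG (hv t) (hv t)
    -- The G-double-integral vanishes by antisymmetry.
    have hGzero : (∫ p : EuclideanSpace ℝ (Fin N) × EuclideanSpace ℝ (Fin N),
        G (p.1 - p.2) * (v p.2 t - v p.1 t) ∂(μB.prod μB)) = 0 := by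
      have hswap := integral_prod_swap (μ := μB) (ν := μB)
        (fun p : EuclideanSpace ℝ (Fin N) × EuclideanSpace ℝ (Fin N) =>
          G (p.1 - p.2) * (v p.2 t - v p.1 t))
      have heq : (fun p : EuclideanSpace ℝ (Fin N) × EuclideanSpace ℝ (Fin N) =>
          G (p.swap.1 - p.swap.2) * (v p.swap.2 t - v p.swap.1 t)) =
          fun p => -(G (p.1 - p.2) * (v p.2 t - v p.1 t)) := by
        funext p
        have : G (p.2 - p.1) = G (p.1 - p.2) := by
          rw [← hGs (p.1 - p.2), neg_sub]
        simp only [Prod.fst_swap, Prod.snd_swap, this]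
        ring
      rw [heq] at hswap
      rw [integral_neg] at hswap
      linarith
    -- the B×A double integral vanishes using the elliptic equation
    have hBAzero : (∫ p : EuclideanSpace ℝ (Fin N) × EuclideanSpace ℝ (Fin N),
        J (p.1 - p.2) * (u p.2 t - v p.1 t) ∂(μB.prod μA)) = 0 := by
      rw [integral_prod _ hgint]
      have : (∫ x, ∫ y, J (x - y) * (u y t - v x t) ∂μA ∂μB) =
          ∫ x, -(∫ y, G (x - y) * (v y t - v x t) ∂μB) ∂μB := by
        refine setIntegral_congr_fun hBm fun x hx => ?_
        have := hEll t ht x hx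
        linarith
      rw [this, integral_neg]
      rw [show (∫ x, ∫ y, G (x - y) * (v y t - v x t) ∂μB ∂μB) =
          ∫ p : EuclideanSpace ℝ (Fin N) × EuclideanSpace ℝ (Fin N),
            G (p.1 - p.2) * (v p.2 t - v p.1 t) ∂(μB.prod μB) from integral_prod _ hhint |>.symm]
      rw [hGzero, neg_zero]
    -- hence the A×B double integral vanishes as well
    have hABzero : (∫ p : EuclideanSpace ℝ (Fin N) × EuclideanSpace ℝ (Fin N),
        J (p.1 - p.2) * (v p.2 t - u p.1 t) ∂(μA.prod μB)) = 0 := by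
      have hswap := integral_prod_swap (μ := μA) (ν := μB)
        (fun p : EuclideanSpace ℝ (Fin N) × EuclideanSpace ℝ (Fin N) =>
          J (p.1 - p.2) * (v p.2 t - u p.1 t))
      have heq : (fun p : EuclideanSpace ℝ (Fin N) × EuclideanSpace ℝ (Fin N) =>
          J (p.swap.1 - p.swap.2) * (v p.swap.2 t - u p.swap.1 t)) =
          fun p => -(J (p.1 - p.2) * (u p.2 t - v p.1 t)) := by
        funext p
        have : J (p.2 - p.1) = J (p.1 - p.2) := by
          rw [← hJs (p.1 - p.2), neg_sub]
        simp only [Prod.fst_swap, Prod.snd_swap, this]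
        ring
      rw [heq, integral_neg, hBAzero, neg_zero] at hswap
      exact hswap.symm
    -- the iterated integral over A of the nonlocal term vanishes
    have hIzero : (∫ x in A, ∫ y in B, J (x - y) * (v y t - u x t)) = 0 := by
      rw [show (∫ x, ∫ y, J (x - y) * (v y t - u x t) ∂μB ∂μA) =
          ∫ p : EuclideanSpace ℝ (Fin N) × EuclideanSpace ℝ (Fin N),
            J (p.1 - p.2) * (v p.2 t - u p.1 t) ∂(μA.prod μB) from integral_prod _ hfint |>.symm]
      exact hABzero
    have hInner : Integrable (fun x => ∫ y in B, J (x - y) * (v y t - u x t)) μA :=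
      hfint.integral_prod_left
    have hD : (∫ x in A, (L x t + ∫ y in B, J (x - y) * (v y t - u x t))) = 0 := by
      by_cases hL : Integrable (fun x => L x t) μA
      · rw [integral_add hL hInner, hNeumann t ht, hIzero, add_zero]
      · rw [integral_undef]
        intro hC
        exact hL ((hC.sub hInner).congr
          (Filter.Eventually.of_forall fun x => by simp only [Pi.sub_apply]; ring))
    have := hDint t ht
    rwa [hD] at this
  intro t ht
  -- Constant on (0, t]
  have hconst : ∀ s ∈ Set.Ioc (0:ℝ) t, (∫ x in A, u x s) = ∫ x in A, u x t := by
    intro s hs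
    have hsub : Set.Icc s t ⊆ Set.Ici (0:ℝ) := fun x hx => le_trans hs.1.le hx.1
    have := constant_of_has_deriv_right_zero (f := fun s => ∫ x in A, u x s) (a := s) (b := t)
      (hcont.mono hsub)
      (fun x hx => (hderiv0 x (lt_of_lt_of_le hs.1 hx.1)).hasDerivWithinAt)
      t ⟨hs.2, le_rfl⟩
    exact this.symm
  -- Pass to the limit s → 0⁺ using continuity at 0.
  have h1 : Filter.Tendsto (fun s => ∫ x in A, u x s) (nhdsWithin 0 (Set.Ioi 0))
      (nhds (∫ x in A, u x 0)) :=
    ((hcont 0 Set.self_mem_Ici).mono_left (nhdsWithin_mono 0 Set.Ioi_subset_Ici_self))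
  have h2 : Filter.Tendsto (fun s => ∫ x in A, u x s) (nhdsWithin 0 (Set.Ioi 0))
      (nhds (∫ x in A, u x t)) := by
    refine Filter.Tendsto.congr' ?_ tendsto_const_nhds
    filter_upwards [Ioc_mem_nhdsGT_of_mem (Set.mem_Ico.mpr ⟨le_rfl, ht⟩)] with s hs
    exact (hconst s hs).symm
  exact tendsto_nhds_unique h2 h1
end

section
/- Let $(u,v)$ be a smooth solution of the elliptic–parabolic system (local elliptic Neumann equation for $u$ in $A$, nonlocal parabolic equation for $v$ in $B$, symmetric kernels, $\int_B v_0 = 0$). Then the energy identity $$\frac{d}{dt}\int_B \frac{v^2(x,t)}{2}\,dx = -\int_A|\nabla u(x,t)|^2\,dx - \frac12\int_B\int_B G(x-y)(v(x,t)-v(y,t))^2\,dx\,dy - \int_A\int_B J(x-y)(u(x,t)-v(y,t))^2\,dy\,dx$$ holds, and if $$\lambda_1 := \inf_{\|v\|_{L^2(B)}=1,\ \int_B v = 0}\Big\{\tfrac12\int_A|\nabla u|^2 + \tfrac14\iint_{B\times B}G(x-y)(v(x)-v(y))^2 + \tfrac12\iint_{A\times B}J(x-y)(v(y)-u(x))^2\Big\}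 > 0,$$ then $\|v(\cdot,t)\|_{L^2(B)} \leq e^{-\lambda_1 t/2}\|v_0\|_{L^2(B)}$ for all $t \geq 0$. -/
open MeasureTheory

variable {n : ℕ}

private lemma aux_int {μ ν : Measure (EuclideanSpace ℝ (Fin n))} [SFinite μ] [SFinite ν]
    {K : EuclideanSpace ℝ (Fin n) → ℝ} (hKc : Continuous K) {C : ℝ}
    (hK : ∀ z, |K z| ≤ C) {f g : EuclideanSpace ℝ (Fin n) → ℝ}
    (hf : Integrable f μ) (hg : Integrable g ν) :
    Integrable (fun p : EuclideanSpace ℝ (Fin n) × EuclideanSpace ℝ (Fin n) =>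
      K (p.1 - p.2) * (f p.1 * g p.2)) (μ.prod ν) := by
  have hm : AEStronglyMeasurable
      (fun p : EuclideanSpace ℝ (Fin n) × EuclideanSpace ℝ (Fin n) =>
        K (p.1 - p.2) * (f p.1 * g p.2)) (μ.prod ν) :=
    ((hKc.comp (continuous_fst.sub continuous_snd)).aestronglyMeasurable).mul
      (hf.1.comp_fst.mul hg.1.comp_snd)
  refine Integrable.mono' ((hf.abs.mul_prod hg.abs).const_mul C) hm ?_
  refine Filter.Eventually.of_forall fun p => ?_
  rw [Real.norm_eq_abs, abs_mul, abs_mul]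
  exact mul_le_mul_of_nonneg_right (hK _) (mul_nonneg (abs_nonneg _) (abs_nonneg _))

private lemma aux_swap {μ ν : Measure (EuclideanSpace ℝ (Fin n))} [SFinite μ] [SFinite ν]
    {K : EuclideanSpace ℝ (Fin n) → ℝ} (hKs : ∀ z, K (-z) = K z)
    (F : EuclideanSpace ℝ (Fin n) → EuclideanSpace ℝ (Fin n) → ℝ) :
    (∫ p, K (p.1 - p.2) * F p.1 p.2 ∂(μ.prod ν)) =
      ∫ p, K (p.1 - p.2) * F p.2 p.1 ∂(ν.prod μ) := by
  rw [← integral_prod_swap (fun p : EuclideanSpace ℝ (Fin n) × EuclideanSpace ℝ (Fin n) =>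
    K (p.1 - p.2) * F p.1 p.2)]
  refine integral_congr_ae (Filter.Eventually.of_forall fun z => ?_)
  show K (z.2 - z.1) * F z.2 z.1 = K (z.1 - z.2) * F z.2 z.1
  rw [← neg_sub z.1 z.2, hKs]

private lemma aux_bilin {μ ν : Measure (EuclideanSpace ℝ (Fin n))}
    [IsFiniteMeasure μ] [IsFiniteMeasure ν]
    {K : EuclideanSpace ℝ (Fin n) → ℝ} (hKc : Continuous K) {C : ℝ}
    (hK : ∀ z, |K z| ≤ C) {f g : EuclideanSpace ℝ (Fin n) → ℝ}
    (hf : Integrable f μ) (hf2 : Integrable (fun x => f x ^ 2) μ)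
    (hg : Integrable g ν) :
    (∫ x, (f x * ∫ y, K (x - y) * (g y - f x) ∂ν) ∂μ) =
      (∫ p, K (p.1 - p.2) * (f p.1 * g p.2) ∂(μ.prod ν)) -
        ∫ p, K (p.1 - p.2) * f p.1 ^ 2 ∂(μ.prod ν) := by
  have hfg := aux_int hKc hK hf hg
  have hf2' : Integrable (fun p : EuclideanSpace ℝ (Fin n) × EuclideanSpace ℝ (Fin n) =>
      K (p.1 - p.2) * f p.1 ^ 2) (μ.prod ν) := by
    simpa using aux_int hKc hK hf2 (integrable_const (1 : ℝ) (μ := ν))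
  have hptwise : ∀ x, f x * (∫ y, K (x - y) * (g y - f x) ∂ν) =
      ∫ y, (K (x - y) * (f x * g y) - K (x - y) * f x ^ 2) ∂ν := by
    intro x
    rw [← integral_const_mul]
    exact integral_congr_ae (Filter.Eventually.of_forall fun y => by ring)
  calc (∫ x, (f x * ∫ y, K (x - y) * (g y - f x) ∂ν) ∂μ)
      = ∫ x, ∫ y, (K (x - y) * (f x * g y) - K (x - y) * f x ^ 2) ∂ν ∂μ :=
        integral_congr_ae (Filter.Eventually.of_forall fun x => hptwise x)
    _ = ∫ p, (K (p.1 - p.2) * (f p.1 * g p.2) - K (p.1 - p.2) * f p.1 ^ 2) ∂(μ.prod ν) :=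
        integral_integral (by exact hfg.sub hf2')
    _ = _ := integral_sub hfg hf2'

private lemma aux_bilin_int {μ ν : Measure (EuclideanSpace ℝ (Fin n))}
    [IsFiniteMeasure μ] [IsFiniteMeasure ν]
    {K : EuclideanSpace ℝ (Fin n) → ℝ} (hKc : Continuous K) {C : ℝ}
    (hK : ∀ z, |K z| ≤ C) {f g : EuclideanSpace ℝ (Fin n) → ℝ}
    (hf : Integrable f μ) (hf2 : Integrable (fun x => f x ^ 2) μ)
    (hg : Integrable g ν) :
    Integrable (fun x => f x * ∫ y, K (x - y) * (g y - f x) ∂ν) μ := by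
  have hfg := aux_int hKc hK hf hg
  have hf2' : Integrable (fun p : EuclideanSpace ℝ (Fin n) × EuclideanSpace ℝ (Fin n) =>
      K (p.1 - p.2) * f p.1 ^ 2) (μ.prod ν) := by
    simpa using aux_int hKc hK hf2 (integrable_const (1 : ℝ) (μ := ν))
  have hsub : Integrable (fun p : EuclideanSpace ℝ (Fin n) × EuclideanSpace ℝ (Fin n) =>
      K (p.1 - p.2) * (f p.1 * g p.2) - K (p.1 - p.2) * f p.1 ^ 2) (μ.prod ν) :=
    (hfg.sub hf2').congr (Filter.Eventually.of_forall fun p => rfl)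
  have := hsub.integral_prod_left
  refine this.congr (Filter.Eventually.of_forall fun x => ?_)
  simp only
  rw [← integral_const_mul]
  exact (integral_congr_ae (Filter.Eventually.of_forall fun y => by ring)).symm

private lemma aux_sq {μ ν : Measure (EuclideanSpace ℝ (Fin n))}
    [IsFiniteMeasure μ] [IsFiniteMeasure ν]
    {K : EuclideanSpace ℝ (Fin n) → ℝ} (hKc : Continuous K) {C : ℝ}
    (hK : ∀ z, |K z| ≤ C) {f g : EuclideanSpace ℝ (Fin n) → ℝ}
    (hf : Integrable f μ) (hf2 : Integrable (fun x => f x ^ 2) μ)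
    (hg : Integrable g ν) (hg2 : Integrable (fun x => g x ^ 2) ν) :
    (∫ x, ∫ y, K (x - y) * (f x - g y) ^ 2 ∂ν ∂μ) =
      (∫ p, K (p.1 - p.2) * f p.1 ^ 2 ∂(μ.prod ν)) -
        2 * (∫ p, K (p.1 - p.2) * (f p.1 * g p.2) ∂(μ.prod ν)) +
        ∫ p, K (p.1 - p.2) * g p.2 ^ 2 ∂(μ.prod ν) := by
  have hfg := aux_int hKc hK hf hg
  have hf2' : Integrable (fun p : EuclideanSpace ℝ (Fin n) × EuclideanSpace ℝ (Fin n) =>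
      K (p.1 - p.2) * f p.1 ^ 2) (μ.prod ν) := by
    simpa using aux_int hKc hK hf2 (integrable_const (1 : ℝ) (μ := ν))
  have hg2' : Integrable (fun p : EuclideanSpace ℝ (Fin n) × EuclideanSpace ℝ (Fin n) =>
      K (p.1 - p.2) * g p.2 ^ 2) (μ.prod ν) := by
    simpa using aux_int hKc hK (integrable_const (1 : ℝ) (μ := μ)) hg2
  calc (∫ x, ∫ y, K (x - y) * (f x - g y) ^ 2 ∂ν ∂μ)
      = ∫ x, ∫ y, (K (x - y) * f x ^ 2 - 2 * (K (x - y) * (f x * g y))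
          + K (x - y) * g y ^ 2) ∂ν ∂μ :=
        integral_congr_ae (Filter.Eventually.of_forall fun x =>
          integral_congr_ae (Filter.Eventually.of_forall fun y => by ring))
    _ = ∫ p, (K (p.1 - p.2) * f p.1 ^ 2 - 2 * (K (p.1 - p.2) * (f p.1 * g p.2))
          + K (p.1 - p.2) * g p.2 ^ 2) ∂(μ.prod ν) :=
        integral_integral (by exact (hf2'.sub (hfg.const_mul 2)).add hg2')
    _ = _ := by
        have h12 : Integrable (fun p : EuclideanSpace ℝ (Fin n) × EuclideanSpace ℝ (Fin n) =>
            K (p.1 - p.2) * f p.1 ^ 2 - 2 * (K (p.1 - p.2) * (f p.1 * g p.2))) (μ.prod ν) := by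
          exact hf2'.sub (hfg.const_mul 2)
        rw [integral_add h12 hg2', integral_sub hf2' (hfg.const_mul 2), integral_const_mul]

private lemma aux_grad_cmul {f : EuclideanSpace ℝ (Fin n) → ℝ} {a : ℝ} (ha : a ≠ 0)
    (x : EuclideanSpace ℝ (Fin n)) :
    gradient (fun z => a * f z) x = a • gradient f x := by
  by_cases h : DifferentiableAt ℝ f x
  · simp only [gradient, fderiv_const_mul h a, _root_.map_smul]
  · have h2 : ¬ DifferentiableAt ℝ (fun z => a * f z) x := by
      intro hd
      have := hd.const_mul a⁻¹
      simp only [← mul_assoc, inv_mul_cancel₀ ha, one_mul] at this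
      exact h this
    rw [gradient_eq_zero_of_not_differentiableAt h,
      gradient_eq_zero_of_not_differentiableAt h2, smul_zero]

/-- Energy identity and exponential decay for the elliptic–parabolic system (mean-zero
initial data): for a smooth solution `(u, v)` (with `L = Δu`, the Neumann boundary
condition and Green's identity encoded in `hGreen`, and differentiation under the
integral sign encoded in `hDint`),
`d/dt ∫_B v²/2 = -∫_A |∇u|² - (1/2)∬_{B×B} G(x-y)(v(x)-v(y))² - ∬_{A×B} J(x-y)(u(x)-v(y))²`,
and if the eigenvalue `λ₁` (the infimum of the energy over admissible normalized mean-zero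
pairs) is positive, then `‖v(·,t)‖_{L²(B)} ≤ e^{-λ₁ t / 2} ‖v₀‖_{L²(B)}` for all `t ≥ 0`. -/
theorem stmt_17 {N : ℕ} (A B : Set (EuclideanSpace ℝ (Fin N)))
    (hAo : IsOpen A) (hAb : Bornology.IsBounded A)
    (hBm : MeasurableSet B) (hBc : IsConnected B) (hBb : Bornology.IsBounded B)
    (J G : EuclideanSpace ℝ (Fin N) → ℝ)
    (hJc : Continuous J) (hGc : Continuous G)
    (hJ0 : ∀ z, 0 ≤ J z) (hG0 : ∀ z, 0 ≤ G z)
    (hJbd : ∃ C, ∀ z, J z ≤ C) (hGbd : ∃ C, ∀ z, G z ≤ C)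
    (hJs : ∀ z, J (-z) = J z) (hGs : ∀ z, G (-z) = G z)
    (u v L : EuclideanSpace ℝ (Fin N) → ℝ → ℝ)
    (huL2 : ∀ t, 0 ≤ t → MemLp (fun x => u x t) 2 (volume.restrict A))
    (hudiff : ∀ t, 0 ≤ t → ∀ x ∈ A, DifferentiableAt ℝ (fun z => u z t) x)
    (hugrad : ∀ t, 0 ≤ t →
      MemLp (fun x => ‖gradient (fun z => u z t) x‖) 2 (volume.restrict A))
    (hvL2 : ∀ t, 0 ≤ t → MemLp (fun x => v x t) 2 (volume.restrict B))
    (hmean : ∀ t, 0 ≤ t → (∫ x in B, v x t) = 0)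
    (hPDE : ∀ x ∈ B, ∀ t, 0 ≤ t →
      HasDerivAt (v x)
        ((∫ y in B, G (x - y) * (v y t - v x t)) + ∫ y in A, J (x - y) * (u y t - v x t)) t)
    (hEll : ∀ t, 0 ≤ t → ∀ x ∈ A,
      0 = L x t + ∫ y in B, J (x - y) * (v y t - u x t))
    (hGreen : ∀ t, 0 ≤ t →
      (∫ x in A, L x t * u x t) = -(∫ x in A, ‖gradient (fun z => u z t) x‖ ^ 2))
    (hDint : ∀ t, 0 ≤ t →
      HasDerivAt (fun s => ∫ x in B, (v x s) ^ 2 / 2)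
        (∫ x in B, v x t * ((∫ y in B, G (x - y) * (v y t - v x t))
          + ∫ y in A, J (x - y) * (u y t - v x t))) t) :
    (∀ t, 0 ≤ t →
      HasDerivAt (fun s => ∫ x in B, (v x s) ^ 2 / 2)
        (-(∫ x in A, ‖gradient (fun z => u z t) x‖ ^ 2)
          - (1 / 2) * (∫ x in B, ∫ y in B, G (x - y) * (v x t - v y t) ^ 2)
          - ∫ x in A, ∫ y in B, J (x - y) * (u x t - v y t) ^ 2) t) ∧
    (0 < sInf {E : ℝ | ∃ u' v' : EuclideanSpace ℝ (Fin N) → ℝ,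
        MemLp u' 2 (volume.restrict A) ∧
        (∀ x ∈ A, DifferentiableAt ℝ u' x) ∧
        MemLp (fun x => ‖gradient u' x‖) 2 (volume.restrict A) ∧
        MemLp v' 2 (volume.restrict B) ∧
        (∫ x in B, (v' x) ^ 2) = 1 ∧ (∫ x in B, v' x) = 0 ∧
        E = (1 / 2) * (∫ x in A, ‖gradient u' x‖ ^ 2)
          + (1 / 4) * (∫ x in B, ∫ y in B, G (x - y) * (v' x - v' y) ^ 2)
          + (1 / 2) * (∫ x in A, ∫ y in B, J (x - y) * (v' y - u' x) ^ 2)} →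
      ∀ t, 0 ≤ t →
        Real.sqrt (∫ x in B, (v x t) ^ 2) ≤
          Real.exp (-(sInf {E : ℝ | ∃ u' v' : EuclideanSpace ℝ (Fin N) → ℝ,
            MemLp u' 2 (volume.restrict A) ∧
            (∀ x ∈ A, DifferentiableAt ℝ u' x) ∧
            MemLp (fun x => ‖gradient u' x‖) 2 (volume.restrict A) ∧
            MemLp v' 2 (volume.restrict B) ∧
            (∫ x in B, (v' x) ^ 2) = 1 ∧ (∫ x in B, v' x) = 0 ∧
            E = (1 / 2) * (∫ x in A, ‖gradient u' x‖ ^ 2)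
              + (1 / 4) * (∫ x in B, ∫ y in B, G (x - y) * (v' x - v' y) ^ 2)
              + (1 / 2) * (∫ x in A, ∫ y in B, J (x - y) * (v' y - u' x) ^ 2)}) * t / 2) *
            Real.sqrt (∫ x in B, (v x 0) ^ 2)) := by
  classical
  haveI finA : IsFiniteMeasure (volume.restrict A) :=
    ⟨by rw [Measure.restrict_apply_univ]; exact hAb.measure_lt_top⟩
  haveI finB : IsFiniteMeasure (volume.restrict B) :=
    ⟨by rw [Measure.restrict_apply_univ]; exact hBb.measure_lt_top⟩
  obtain ⟨CJ, hCJ⟩ := hJbd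
  obtain ⟨CG, hCG⟩ := hGbd
  have hCJ' : ∀ z, |J z| ≤ CJ := fun z => by rw [abs_of_nonneg (hJ0 z)]; exact hCJ z
  have hCG' : ∀ z, |G z| ≤ CG := fun z => by rw [abs_of_nonneg (hG0 z)]; exact hCG z
  have hvI : ∀ t, 0 ≤ t → Integrable (fun x => v x t) (volume.restrict B) :=
    fun t ht => (hvL2 t ht).integrable one_le_two
  have hv2I : ∀ t, 0 ≤ t → Integrable (fun x => (v x t) ^ 2) (volume.restrict B) :=
    fun t ht => (hvL2 t ht).integrable_sq
  have huI : ∀ t, 0 ≤ t → Integrable (fun x => u x t) (volume.restrict A) :=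
    fun t ht => (huL2 t ht).integrable one_le_two
  have hu2I : ∀ t, 0 ≤ t → Integrable (fun x => (u x t) ^ 2) (volume.restrict A) :=
    fun t ht => (huL2 t ht).integrable_sq
  -- the key value identity
  have key : ∀ t, 0 ≤ t →
      (∫ x in B, v x t * ((∫ y in B, G (x - y) * (v y t - v x t))
          + ∫ y in A, J (x - y) * (u y t - v x t))) =
        -(∫ x in A, ‖gradient (fun z => u z t) x‖ ^ 2)
          - (1 / 2) * (∫ x in B, ∫ y in B, G (x - y) * (v x t - v y t) ^ 2)
          - ∫ x in A, ∫ y in B, J (x - y) * (u x t - v y t) ^ 2 := by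
    intro t ht
    have hDG : (∫ x in B, v x t * ∫ y in B, G (x - y) * (v y t - v x t)) =
        (∫ p, G (p.1 - p.2) * (v p.1 t * v p.2 t)
            ∂((volume.restrict B).prod (volume.restrict B))) -
          ∫ p, G (p.1 - p.2) * (v p.1 t) ^ 2
            ∂((volume.restrict B).prod (volume.restrict B)) := by
      exact aux_bilin hGc hCG' (hvI t ht) (hv2I t ht) (hvI t ht)
    have hDJ : (∫ x in B, v x t * ∫ y in A, J (x - y) * (u y t - v x t)) =
        (∫ p, J (p.1 - p.2) * (v p.1 t * u p.2 t)
            ∂((volume.restrict B).prod (volume.restrict A))) -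
          ∫ p, J (p.1 - p.2) * (v p.1 t) ^ 2
            ∂((volume.restrict B).prod (volume.restrict A)) := by
      exact aux_bilin hJc hCJ' (hvI t ht) (hv2I t ht) (huI t ht)
    have hU1 : (∫ p, J (p.1 - p.2) * (v p.1 t * u p.2 t)
          ∂((volume.restrict B).prod (volume.restrict A))) =
        ∫ p, J (p.1 - p.2) * (u p.1 t * v p.2 t)
          ∂((volume.restrict A).prod (volume.restrict B)) := by
      refine (aux_swap hJs fun a b => v a t * u b t).trans ?_
      exact integral_congr_ae (Filter.Eventually.of_forall fun p => by ring)
    have hU2 : (∫ p, J (p.1 - p.2) * (v p.1 t) ^ 2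
          ∂((volume.restrict B).prod (volume.restrict A))) =
        ∫ p, J (p.1 - p.2) * (v p.2 t) ^ 2
          ∂((volume.restrict A).prod (volume.restrict B)) := by
      exact aux_swap hJs fun a b => (v a t) ^ 2
    have hT3 : (∫ p, G (p.1 - p.2) * (v p.2 t) ^ 2
          ∂((volume.restrict B).prod (volume.restrict B))) =
        ∫ p, G (p.1 - p.2) * (v p.1 t) ^ 2
          ∂((volume.restrict B).prod (volume.restrict B)) := by
      exact aux_swap hGs fun a b => (v b t) ^ 2
    have hGreen1 : (∫ x in A, u x t * ∫ y in B, J (x - y) * (v y t - u x t)) =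
        (∫ p, J (p.1 - p.2) * (u p.1 t * v p.2 t)
            ∂((volume.restrict A).prod (volume.restrict B))) -
          ∫ p, J (p.1 - p.2) * (u p.1 t) ^ 2
            ∂((volume.restrict A).prod (volume.restrict B)) := by
      exact aux_bilin hJc hCJ' (huI t ht) (hu2I t ht) (hvI t ht)
    have hGreen2 : (∫ x in A, L x t * u x t) =
        -(∫ x in A, u x t * ∫ y in B, J (x - y) * (v y t - u x t)) := by
      rw [← integral_neg]
      refine setIntegral_congr_fun hAo.measurableSet fun x hx => ?_
      have h := hEll t ht x hx
      have hL : L x t = -(∫ y in B, J (x - y) * (v y t - u x t)) := by linarith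
      rw [hL]; ring
    have hGrad : (∫ p, J (p.1 - p.2) * (u p.1 t * v p.2 t)
            ∂((volume.restrict A).prod (volume.restrict B))) -
          (∫ p, J (p.1 - p.2) * (u p.1 t) ^ 2
            ∂((volume.restrict A).prod (volume.restrict B))) =
        ∫ x in A, ‖gradient (fun z => u z t) x‖ ^ 2 := by
      have h := hGreen t ht
      rw [hGreen2] at h
      rw [← hGreen1]
      linarith
    have hEG : (∫ x in B, ∫ y in B, G (x - y) * (v x t - v y t) ^ 2) =
        (∫ p, G (p.1 - p.2) * (v p.1 t) ^ 2
            ∂((volume.restrict B).prod (volume.restrict B))) -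
          2 * (∫ p, G (p.1 - p.2) * (v p.1 t * v p.2 t)
            ∂((volume.restrict B).prod (volume.restrict B))) +
          ∫ p, G (p.1 - p.2) * (v p.2 t) ^ 2
            ∂((volume.restrict B).prod (volume.restrict B)) := by
      exact aux_sq hGc hCG' (hvI t ht) (hv2I t ht) (hvI t ht) (hv2I t ht)
    have hEJ : (∫ x in A, ∫ y in B, J (x - y) * (u x t - v y t) ^ 2) =
        (∫ p, J (p.1 - p.2) * (u p.1 t) ^ 2
            ∂((volume.restrict A).prod (volume.restrict B))) -
          2 * (∫ p, J (p.1 - p.2) * (u p.1 t * v p.2 t)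
            ∂((volume.restrict A).prod (volume.restrict B))) +
          ∫ p, J (p.1 - p.2) * (v p.2 t) ^ 2
            ∂((volume.restrict A).prod (volume.restrict B)) := by
      exact aux_sq hJc hCJ' (huI t ht) (hu2I t ht) (hvI t ht) (hv2I t ht)
    have hsplit : (∫ x in B, v x t * ((∫ y in B, G (x - y) * (v y t - v x t))
          + ∫ y in A, J (x - y) * (u y t - v x t))) =
        (∫ x in B, v x t * ∫ y in B, G (x - y) * (v y t - v x t)) +
          ∫ x in B, v x t * ∫ y in A, J (x - y) * (u y t - v x t) := by
      have h1 : Integrable (fun x => v x t * ∫ y in B, G (x - y) * (v y t - v x t))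
          (volume.restrict B) := by
        exact aux_bilin_int hGc hCG' (hvI t ht) (hv2I t ht) (hvI t ht)
      have h2 : Integrable (fun x => v x t * ∫ y in A, J (x - y) * (u y t - v x t))
          (volume.restrict B) := by
        exact aux_bilin_int hJc hCJ' (hvI t ht) (hv2I t ht) (huI t ht)
      rw [← integral_add h1 h2]
      exact integral_congr_ae (Filter.Eventually.of_forall fun x => by ring)
    linarith [hsplit, hDG, hDJ, hU1, hU2, hT3, hGrad, hEG, hEJ]
  have part1 : ∀ t, 0 ≤ t →
      HasDerivAt (fun s => ∫ x in B, (v x s) ^ 2 / 2)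
        (-(∫ x in A, ‖gradient (fun z => u z t) x‖ ^ 2)
          - (1 / 2) * (∫ x in B, ∫ y in B, G (x - y) * (v x t - v y t) ^ 2)
          - ∫ x in A, ∫ y in B, J (x - y) * (u x t - v y t) ^ 2) t := by
    intro t ht
    have h := hDint t ht
    rwa [key t ht] at h
  refine ⟨part1, ?_⟩
  intro hpos t ht
  set Λ := sInf {E : ℝ | ∃ u' v' : EuclideanSpace ℝ (Fin N) → ℝ,
      MemLp u' 2 (volume.restrict A) ∧
      (∀ x ∈ A, DifferentiableAt ℝ u' x) ∧
      MemLp (fun x => ‖gradient u' x‖) 2 (volume.restrict A) ∧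
      MemLp v' 2 (volume.restrict B) ∧
      (∫ x in B, (v' x) ^ 2) = 1 ∧ (∫ x in B, v' x) = 0 ∧
      E = (1 / 2) * (∫ x in A, ‖gradient u' x‖ ^ 2)
        + (1 / 4) * (∫ x in B, ∫ y in B, G (x - y) * (v' x - v' y) ^ 2)
        + (1 / 2) * (∫ x in A, ∫ y in B, J (x - y) * (v' y - u' x) ^ 2)} with hΛ
  have hBdd : BddBelow {E : ℝ | ∃ u' v' : EuclideanSpace ℝ (Fin N) → ℝ,
      MemLp u' 2 (volume.restrict A) ∧
      (∀ x ∈ A, DifferentiableAt ℝ u' x) ∧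
      MemLp (fun x => ‖gradient u' x‖) 2 (volume.restrict A) ∧
      MemLp v' 2 (volume.restrict B) ∧
      (∫ x in B, (v' x) ^ 2) = 1 ∧ (∫ x in B, v' x) = 0 ∧
      E = (1 / 2) * (∫ x in A, ‖gradient u' x‖ ^ 2)
        + (1 / 4) * (∫ x in B, ∫ y in B, G (x - y) * (v' x - v' y) ^ 2)
        + (1 / 2) * (∫ x in A, ∫ y in B, J (x - y) * (v' y - u' x) ^ 2)} := by
    refine ⟨0, ?_⟩
    rintro E ⟨u', v', _, _, _, _, _, _, rfl⟩
    have h1 : (0:ℝ) ≤ ∫ x in A, ‖gradient u' x‖ ^ 2 :=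
      setIntegral_nonneg hAo.measurableSet fun x _ => by positivity
    have h2 : (0:ℝ) ≤ ∫ x in B, ∫ y in B, G (x - y) * (v' x - v' y) ^ 2 :=
      setIntegral_nonneg hBm fun x _ =>
        setIntegral_nonneg hBm fun y _ => mul_nonneg (hG0 _) (sq_nonneg _)
    have h3 : (0:ℝ) ≤ ∫ x in A, ∫ y in B, J (x - y) * (v' y - u' x) ^ 2 :=
      setIntegral_nonneg hAo.measurableSet fun x _ =>
        setIntegral_nonneg hBm fun y _ => mul_nonneg (hJ0 _) (sq_nonneg _)
    linarith
  have hgradnn : ∀ s : ℝ, (0:ℝ) ≤ ∫ x in A, ‖gradient (fun z => u z s) x‖ ^ 2 :=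
    fun s => setIntegral_nonneg hAo.measurableSet fun x _ => by positivity
  have hEGnn : ∀ s : ℝ, (0:ℝ) ≤ ∫ x in B, ∫ y in B, G (x - y) * (v x s - v y s) ^ 2 :=
    fun s => setIntegral_nonneg hBm fun x _ =>
      setIntegral_nonneg hBm fun y _ => mul_nonneg (hG0 _) (sq_nonneg _)
  have hEJnn : ∀ s : ℝ, (0:ℝ) ≤ ∫ x in A, ∫ y in B, J (x - y) * (u x s - v y s) ^ 2 :=
    fun s => setIntegral_nonneg hAo.measurableSet fun x _ =>
      setIntegral_nonneg hBm fun y _ => mul_nonneg (hJ0 _) (sq_nonneg _)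
  have hcnn : ∀ s : ℝ, (0:ℝ) ≤ ∫ x in B, (v x s) ^ 2 :=
    fun s => setIntegral_nonneg hBm fun x _ => sq_nonneg _
  have hEnergy : ∀ s, 0 ≤ s →
      Λ * (∫ x in B, (v x s) ^ 2) ≤
        (1 / 2) * (∫ x in A, ‖gradient (fun z => u z s) x‖ ^ 2)
          + (1 / 4) * (∫ x in B, ∫ y in B, G (x - y) * (v x s - v y s) ^ 2)
          + (1 / 2) * (∫ x in A, ∫ y in B, J (x - y) * (u x s - v y s) ^ 2) := by
    intro s hs
    rcases eq_or_lt_of_le (hcnn s) with hc0 | hc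
    · rw [← hc0, mul_zero]
      linarith [hgradnn s, hEGnn s, hEJnn s]
    · set c := ∫ x in B, (v x s) ^ 2 with hcdef
      set a := (Real.sqrt c)⁻¹ with ha
      have hsc : 0 < Real.sqrt c := Real.sqrt_pos.mpr hc
      have ha0 : a ≠ 0 := (inv_pos.mpr hsc).ne'
      have ha2 : a ^ 2 = c⁻¹ := by rw [ha, inv_pow, Real.sq_sqrt hc.le]
      have hgradeq : ∀ x, ‖gradient (fun x' => a * u x' s) x‖ = |a| * ‖gradient (fun z => u z s) x‖ := by
        intro x
        rw [aux_grad_cmul ha0, norm_smul, Real.norm_eq_abs]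
      have hmem : ((1 / 2) * (∫ x in A, ‖gradient (fun x' => a * u x' s) x‖ ^ 2)
            + (1 / 4) * (∫ x in B, ∫ y in B, G (x - y) * (a * v x s - a * v y s) ^ 2)
            + (1 / 2) * (∫ x in A, ∫ y in B, J (x - y) * (a * v y s - a * u x s) ^ 2)) ∈
          {E : ℝ | ∃ u' v' : EuclideanSpace ℝ (Fin N) → ℝ,
            MemLp u' 2 (volume.restrict A) ∧
            (∀ x ∈ A, DifferentiableAt ℝ u' x) ∧
            MemLp (fun x => ‖gradient u' x‖) 2 (volume.restrict A) ∧
            MemLp v' 2 (volume.restrict B) ∧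
            (∫ x in B, (v' x) ^ 2) = 1 ∧ (∫ x in B, v' x) = 0 ∧
            E = (1 / 2) * (∫ x in A, ‖gradient u' x‖ ^ 2)
              + (1 / 4) * (∫ x in B, ∫ y in B, G (x - y) * (v' x - v' y) ^ 2)
              + (1 / 2) * (∫ x in A, ∫ y in B, J (x - y) * (v' y - u' x) ^ 2)} := by
        refine ⟨fun x => a * u x s, fun x => a * v x s, ?_, ?_, ?_, ?_, ?_, ?_, rfl⟩
        · exact (huL2 s hs).const_mul a
        · exact fun x hx => (hudiff s hs x hx).const_mul a
        · have heq : (fun x => ‖gradient (fun x' => a * u x' s) x‖) =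
              fun x => |a| * ‖gradient (fun z => u z s) x‖ := funext hgradeq
          rw [heq]
          exact (hugrad s hs).const_mul |a|
        · exact (hvL2 s hs).const_mul a
        · have heq : (fun x => (a * v x s) ^ 2) = fun x => a ^ 2 * (v x s) ^ 2 := by
            funext x; ring
          rw [heq, integral_const_mul, ha2, ← hcdef, inv_mul_cancel₀ hc.ne']
        · rw [integral_const_mul, hmean s hs, mul_zero]
      have hle := csInf_le hBdd hmem
      rw [← hΛ] at hle
      have hg' : (∫ x in A, ‖gradient (fun x' => a * u x' s) x‖ ^ 2) =
          a ^ 2 * ∫ x in A, ‖gradient (fun z => u z s) x‖ ^ 2 := by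
        rw [← integral_const_mul]
        refine integral_congr_ae (Filter.Eventually.of_forall fun x => ?_)
        show ‖gradient (fun x' => a * u x' s) x‖ ^ 2 =
          a ^ 2 * ‖gradient (fun z => u z s) x‖ ^ 2
        rw [hgradeq x, mul_pow, sq_abs]
      have hG'eq : (∫ x in B, ∫ y in B, G (x - y) * (a * v x s - a * v y s) ^ 2) =
          a ^ 2 * ∫ x in B, ∫ y in B, G (x - y) * (v x s - v y s) ^ 2 := by
        rw [← integral_const_mul]
        refine integral_congr_ae (Filter.Eventually.of_forall fun x => ?_)
        show (∫ y in B, G (x - y) * (a * v x s - a * v y s) ^ 2) =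
          a ^ 2 * ∫ y in B, G (x - y) * (v x s - v y s) ^ 2
        rw [← integral_const_mul]
        exact integral_congr_ae (Filter.Eventually.of_forall fun y => by ring)
      have hJ'eq : (∫ x in A, ∫ y in B, J (x - y) * (a * v y s - a * u x s) ^ 2) =
          a ^ 2 * ∫ x in A, ∫ y in B, J (x - y) * (u x s - v y s) ^ 2 := by
        rw [← integral_const_mul]
        refine integral_congr_ae (Filter.Eventually.of_forall fun x => ?_)
        show (∫ y in B, J (x - y) * (a * v y s - a * u x s) ^ 2) =
          a ^ 2 * ∫ y in B, J (x - y) * (u x s - v y s) ^ 2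
        rw [← integral_const_mul]
        exact integral_congr_ae (Filter.Eventually.of_forall fun y => by ring)
      rw [hg', hG'eq, hJ'eq] at hle
      have hmul := mul_le_mul_of_nonneg_right hle (hcnn s)
      rw [← hcdef] at hmul
      have hac : a ^ 2 * c = 1 := by rw [ha2, inv_mul_cancel₀ hc.ne']
      have heq2 : ((1 / 2) * (a ^ 2 * ∫ x in A, ‖gradient (fun z => u z s) x‖ ^ 2)
            + (1 / 4) * (a ^ 2 * ∫ x in B, ∫ y in B, G (x - y) * (v x s - v y s) ^ 2)
            + (1 / 2) * (a ^ 2 * ∫ x in A, ∫ y in B, J (x - y) * (u x s - v y s) ^ 2)) * c =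
          (1 / 2) * (∫ x in A, ‖gradient (fun z => u z s) x‖ ^ 2)
            + (1 / 4) * (∫ x in B, ∫ y in B, G (x - y) * (v x s - v y s) ^ 2)
            + (1 / 2) * (∫ x in A, ∫ y in B, J (x - y) * (u x s - v y s) ^ 2) := by
        linear_combination ((1 / 2) * (∫ x in A, ‖gradient (fun z => u z s) x‖ ^ 2)
            + (1 / 4) * (∫ x in B, ∫ y in B, G (x - y) * (v x s - v y s) ^ 2)
            + (1 / 2) * (∫ x in A, ∫ y in B, J (x - y) * (u x s - v y s) ^ 2)) * hac
      rw [heq2] at hmul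
      exact hmul
  -- the function Φ
  have hFhalf : ∀ s : ℝ, (∫ x in B, (v x s) ^ 2 / 2) = (∫ x in B, (v x s) ^ 2) / 2 :=
    fun s => integral_div 2 _
  have hΦd : ∀ s, 0 ≤ s →
      HasDerivAt (fun r => (∫ x in B, (v x r) ^ 2 / 2) * Real.exp (Λ * r))
        ((-(∫ x in A, ‖gradient (fun z => u z s) x‖ ^ 2)
            - (1 / 2) * (∫ x in B, ∫ y in B, G (x - y) * (v x s - v y s) ^ 2)
            - ∫ x in A, ∫ y in B, J (x - y) * (u x s - v y s) ^ 2) * Real.exp (Λ * s)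
          + (∫ x in B, (v x s) ^ 2 / 2) * (Real.exp (Λ * s) * Λ)) s := by
    intro s hs
    have he : HasDerivAt (fun r => Real.exp (Λ * r)) (Real.exp (Λ * s) * Λ) s := by
      simpa using ((hasDerivAt_id s).const_mul Λ).exp
    exact (part1 s hs).mul he
  have hanti : AntitoneOn (fun r => (∫ x in B, (v x r) ^ 2 / 2) * Real.exp (Λ * r))
      (Set.Ici (0:ℝ)) := by
    refine antitoneOn_of_deriv_nonpos (convex_Ici 0) ?_ ?_ ?_
    · exact fun s hs => (hΦd s hs).continuousAt.continuousWithinAt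
    · intro s hs
      rw [interior_Ici] at hs
      exact ((hΦd s hs.le).differentiableAt).differentiableWithinAt
    · intro s hs
      rw [interior_Ici] at hs
      rw [(hΦd s hs.le).deriv]
      have h1 := hEnergy s hs.le
      have h2 : (0:ℝ) < Real.exp (Λ * s) := Real.exp_pos _
      have h3 := hcnn s
      have h4 := hFhalf s
      have h5 : (0:ℝ) < Λ := hpos
      have h4e : (∫ x in B, (v x s) ^ 2 / 2) * (Real.exp (Λ * s) * Λ) =
          (∫ x in B, (v x s) ^ 2) / 2 * (Real.exp (Λ * s) * Λ) := by rw [h4]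
      nlinarith [mul_le_mul_of_nonneg_right h1 h2.le,
        mul_nonneg (mul_nonneg h5.le h3) h2.le, h4e,
        mul_nonneg (hgradnn s) h2.le, mul_nonneg (hEGnn s) h2.le,
        mul_nonneg (hEJnn s) h2.le]
  have hmono := hanti (Set.self_mem_Ici) (Set.mem_Ici.mpr ht) ht
  simp only [mul_zero, Real.exp_zero, mul_one] at hmono
  -- hmono : F t * exp (Λ t) ≤ F 0
  have hq : (∫ x in B, (v x t) ^ 2) ≤ Real.exp (-(Λ * t)) * ∫ x in B, (v x 0) ^ 2 := by
    have h2 : (0:ℝ) < Real.exp (Λ * t) := Real.exp_pos _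
    rw [hFhalf t, hFhalf 0] at hmono
    have h3 : (∫ x in B, (v x t) ^ 2) * Real.exp (Λ * t) ≤ ∫ x in B, (v x 0) ^ 2 := by
      linarith
    have h5 : (∫ x in B, (v x t) ^ 2) ≤ (∫ x in B, (v x 0) ^ 2) / Real.exp (Λ * t) :=
      (le_div_iff₀ h2).mpr h3
    rw [Real.exp_neg, inv_mul_eq_div]
    exact h5
  calc Real.sqrt (∫ x in B, (v x t) ^ 2)
      ≤ Real.sqrt (Real.exp (-(Λ * t)) * ∫ x in B, (v x 0) ^ 2) := Real.sqrt_le_sqrt hq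
    _ = Real.sqrt (Real.exp (-(Λ * t))) * Real.sqrt (∫ x in B, (v x 0) ^ 2) :=
        Real.sqrt_mul (Real.exp_nonneg _) _
    _ = Real.exp (-Λ * t / 2) * Real.sqrt (∫ x in B, (v x 0) ^ 2) := by
        rw [← Real.exp_half]
        have harg : -(Λ * t) / 2 = -Λ * t / 2 := by ring
        rw [harg]
end
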